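/- arXiv:1906.08604 — 3 statements merged into one kernel-verified Lean document; each statement's English description precedes it below -/
import Mathlib

section
/- Let d ≥ 2, 0 < α < d - 1, and let C₁, C₂ ∈ ℝ. Then, as μ → 0⁺, ∫₀^∞ ( |C₁ r^{-α} + C₂ r^{-α-1}| - μ )_+ r^{d-1} dr = (α/(d(d-α))) |C₁|^{d/α} μ^{1 - d/α} + (1/(d-α-1)) sgn(C₁) |C₁|^{(d-α-1)/α} C₂ μ^{1 - (d-1)/α} + o(μ^{1-(d-1)/α}). -/
open MeasureTheory Complex Filter Metric Set Asymptotics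
open scoped Topology

private lemma tendsto_rpow_zero_of_pos' {e : ℝ} (he : 0 < e) :
    Tendsto (fun μ : ℝ => μ ^ e) (𝓝[>] (0:ℝ)) (𝓝 0) := by
  have h := (Real.continuousAt_rpow_const 0 e (Or.inr he.le)).tendsto
  rw [Real.zero_rpow he.ne'] at h
  exact h.mono_left nhdsWithin_le_nhds

private lemma contOn_rpow' (p : ℝ) : ContinuousOn (fun r : ℝ => r ^ p) (Set.Ioi 0) :=
  fun x hx => (Real.continuousAt_rpow_const x p (Or.inl (ne_of_gt hx))).continuousWithinAt

set_option maxHeartbeats 2000000 in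
private lemma pos_case {d : ℕ} (hd : 2 ≤ d) {α : ℝ} (hα : 0 < α) (hαd : α < (d:ℝ) - 1)
    {C₁ : ℝ} (hC₁ : 0 < C₁) (C₂ : ℝ) :
    (fun μ : ℝ =>
        (∫ r in Set.Ioi (0 : ℝ),
            max (|C₁ * r ^ (-α) + C₂ * r ^ (-α - 1)| - μ) 0 * r ^ ((d : ℝ) - 1))
          - α / (d * ((d : ℝ) - α)) * C₁ ^ ((d : ℝ) / α) * μ ^ (1 - (d : ℝ) / α)
          - 1 / ((d : ℝ) - α - 1) * C₁ ^ (((d : ℝ) - α - 1) / α) * C₂ *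
              μ ^ (1 - ((d : ℝ) - 1) / α))
      =o[𝓝[>] (0 : ℝ)] fun μ => μ ^ (1 - ((d : ℝ) - 1) / α) := by
  have hd2 : (2:ℝ) ≤ (d:ℝ) := by exact_mod_cast hd
  have hd0 : (0:ℝ) < d := by linarith
  have hda : (0:ℝ) < (d:ℝ) - α := by linarith
  have hp2 : (0:ℝ) < (d:ℝ) - α - 1 := by linarith
  set a : ℝ := 1 - (d:ℝ)/α with ha
  set b : ℝ := 1 - ((d:ℝ)-1)/α with hb
  have hbneg : b < 0 := by
    rw [hb]; have : 1 < ((d:ℝ)-1)/α := (one_lt_div hα).mpr hαd; linarith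
  have hab : a - b = -α⁻¹ := by rw [ha, hb]; field_simp; ring
  set g : ℝ → ℝ := fun r => C₁ * r ^ (-α) + C₂ * r ^ (-α-1) with hg
  set r₁ : ℝ := 1 + max 0 (max (-C₂/C₁) ((-(α+1)*C₂)/(α*C₁))) with hr₁
  have hmax0 : (0:ℝ) ≤ max 0 (max (-C₂/C₁) ((-(α+1)*C₂)/(α*C₁))) := le_max_left _ _
  have hr₁1 : 1 ≤ r₁ := by rw [hr₁]; linarith
  have hr₁0 : 0 < r₁ := by linarith
  have hlin : ∀ r, r₁ ≤ r → 0 < C₁ * r + C₂ := by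
    intro r hr
    have h1 : -C₂/C₁ < r := by
      have : -C₂/C₁ ≤ max 0 (max (-C₂/C₁) ((-(α+1)*C₂)/(α*C₁))) :=
        le_max_of_le_right (le_max_left _ _)
      rw [hr₁] at hr; linarith
    have := (div_lt_iff₀ hC₁).mp h1
    linarith
  have hlin2 : ∀ r, r₁ ≤ r → 0 < α * C₁ * r + (α+1) * C₂ := by
    intro r hr
    have h1 : (-(α+1)*C₂)/(α*C₁) < r := by
      have : (-(α+1)*C₂)/(α*C₁) ≤ max 0 (max (-C₂/C₁) ((-(α+1)*C₂)/(α*C₁))) :=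
        le_max_of_le_right (le_max_right _ _)
      rw [hr₁] at hr; linarith
    have := (div_lt_iff₀ (mul_pos hα hC₁)).mp h1
    nlinarith
  have hfact : ∀ r : ℝ, 0 < r → g r = (C₁ * r + C₂) * r ^ (-α-1) := by
    intro r hr0
    show C₁ * r ^ (-α) + C₂ * r ^ (-α-1) = _
    rw [show -α = 1 + (-α-1) by ring, Real.rpow_add hr0, Real.rpow_one]; ring
  have hgpos : ∀ r, r₁ ≤ r → 0 < g r := by
    intro r hr
    have hr0 : 0 < r := lt_of_lt_of_le hr₁0 hr
    rw [hfact r hr0]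
    exact mul_pos (hlin r hr) (Real.rpow_pos_of_pos hr0 _)
  have hderiv : ∀ r : ℝ, 0 < r →
      HasDerivAt g (-((α * C₁ * r + (α+1) * C₂) * r ^ (-α-2))) r := by
    intro r hr
    have h1 := (Real.hasDerivAt_rpow_const (x := r) (p := -α) (Or.inl hr.ne')).const_mul C₁
    have h2 := (Real.hasDerivAt_rpow_const (x := r) (p := -α-1) (Or.inl hr.ne')).const_mul C₂
    have h3 := h1.add h2
    refine h3.congr_deriv ?_
    rw [show -α - 1 - 1 = (-α-2) by ring, show -α - 1 = 1 + (-α-2) by ring,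
      Real.rpow_add hr, Real.rpow_one]
    ring
  have hcont : ContinuousOn g (Set.Ioi 0) :=
    (continuousOn_const.mul (contOn_rpow' (-α))).add
      (continuousOn_const.mul (contOn_rpow' (-α-1)))
  have hsub : Set.Ici r₁ ⊆ Set.Ioi (0:ℝ) := fun x hx => lt_of_lt_of_le hr₁0 hx
  have hanti : StrictAntiOn g (Set.Ici r₁) := by
    refine strictAntiOn_of_deriv_neg (convex_Ici r₁) (hcont.mono hsub) ?_
    intro x hx
    rw [interior_Ici] at hx
    have hx0 : 0 < x := lt_trans hr₁0 hx
    rw [(hderiv x hx0).deriv]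
    exact neg_lt_zero.mpr (mul_pos (hlin2 x (le_of_lt hx)) (Real.rpow_pos_of_pos hx0 _))
  have hgto : Tendsto g atTop (𝓝 0) := by
    have h1 : Tendsto (fun r : ℝ => C₁ * r ^ (-α)) atTop (𝓝 0) := by
      simpa using (tendsto_rpow_neg_atTop hα).const_mul C₁
    have h2 : Tendsto (fun r : ℝ => C₂ * r ^ (-α-1)) atTop (𝓝 0) := by
      have := (tendsto_rpow_neg_atTop (show (0:ℝ) < α + 1 by linarith)).const_mul C₂
      simpa [show -(α+1) = -α-1 by ring] using this
    simpa using h1.add h2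
  have hgr₁pos : 0 < g r₁ := hgpos r₁ le_rfl
  have hex : ∀ μ : ℝ, ∃ R : ℝ, 0 < μ → μ < g r₁ → r₁ ≤ R ∧ g R = μ := by
    intro μ
    by_cases hμ : 0 < μ ∧ μ < g r₁
    · obtain ⟨M, hM1, hM2⟩ := ((hgto.eventually_lt_const hμ.1).and (eventually_ge_atTop r₁)).exists
      obtain ⟨Rv, hRv, hgRv⟩ := intermediate_value_Icc' hM2
        ((hcont.mono (fun x hx => lt_of_lt_of_le hr₁0 hx.1)) :
          ContinuousOn g (Set.Icc r₁ M)) ⟨hM1.le, hμ.2.le⟩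
      exact ⟨Rv, fun _ _ => ⟨hRv.1, hgRv⟩⟩
    · exact ⟨r₁, fun h1 h2 => absurd ⟨h1, h2⟩ hμ⟩
  choose R hR using hex
  have hRtop : Tendsto R (𝓝[>] (0:ℝ)) atTop := by
    rw [Filter.tendsto_atTop]
    intro M
    have hM'r₁ : r₁ ≤ max M r₁ := le_max_right _ _
    have hgM' : 0 < g (max M r₁) := hgpos _ hM'r₁
    filter_upwards [Ioo_mem_nhdsGT_of_mem (left_mem_Ico.mpr hgM')] with μ hμ
    have hμ3 : μ < g r₁ :=
      lt_of_lt_of_le hμ.2 (hanti.antitoneOn (self_mem_Ici) hM'r₁ hM'r₁)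
    obtain ⟨hR1, hR2⟩ := hR μ hμ.1 hμ3
    by_contra hcon
    push_neg at hcon
    have hlt : R μ < max M r₁ := lt_of_lt_of_le hcon (le_max_left _ _)
    have := hanti hR1 hM'r₁ hlt
    rw [hR2] at this
    exact absurd hμ.2 (not_lt.mpr this.le)
  -- constants
  set c1 : ℝ := α / ((d:ℝ) * ((d:ℝ) - α)) with hc1
  set c2 : ℝ := (α+1) / ((d:ℝ) * ((d:ℝ) - α - 1)) with hc2
  set Bc : ℝ := 1 / ((d:ℝ) - α - 1) * C₁ ^ (((d:ℝ) - α - 1) / α) * C₂ with hBc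
  set E : ℝ → ℝ := fun μ => ∫ r in Set.Ioc (0:ℝ) r₁,
      max (|C₁ * r ^ (-α) + C₂ * r ^ (-α - 1)| - μ) 0 * r ^ ((d : ℝ) - 1) with hE
  set c₀ : ℝ → ℝ := fun μ => μ * r₁ ^ (d:ℝ) / d
      - (C₁ * r₁ ^ ((d:ℝ) - α) / ((d:ℝ) - α)
        + C₂ * r₁ ^ ((d:ℝ) - α - 1) / ((d:ℝ) - α - 1)) with hc₀
  have hfcont : ∀ μ : ℝ, ContinuousOn
      (fun r => max (|C₁ * r ^ (-α) + C₂ * r ^ (-α - 1)| - μ) 0 * r ^ ((d : ℝ) - 1))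
      (Set.Ioi 0) := fun μ =>
    ((continuous_max.comp_continuousOn
      (((hcont.abs.sub continuousOn_const)).prodMk continuousOn_const)).mul (contOn_rpow' _))
  have hnonneg : ∀ μ : ℝ, ∀ r : ℝ, 0 < r →
      0 ≤ max (|C₁ * r ^ (-α) + C₂ * r ^ (-α - 1)| - μ) 0 * r ^ ((d : ℝ) - 1) :=
    fun μ r hr => mul_nonneg (le_max_right _ _) (Real.rpow_nonneg hr.le _)
  have hbd : ∀ μ : ℝ, 0 ≤ μ → ∀ r : ℝ, 0 < r →
      max (|C₁ * r ^ (-α) + C₂ * r ^ (-α - 1)| - μ) 0 * r ^ ((d : ℝ) - 1) ≤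
        |C₁| * r ^ ((d:ℝ) - α - 1) + |C₂| * r ^ ((d:ℝ) - α - 2) := by
    intro μ hμ r hr
    have h1 : max (|C₁ * r ^ (-α) + C₂ * r ^ (-α - 1)| - μ) 0 ≤
        |C₁| * r ^ (-α) + |C₂| * r ^ (-α - 1) := by
      refine max_le ?_ ?_
      · have := abs_add_le (C₁ * r ^ (-α)) (C₂ * r ^ (-α - 1))
        rw [abs_mul, abs_mul, _root_.abs_of_nonneg (Real.rpow_nonneg hr.le (-α)),
          _root_.abs_of_nonneg (Real.rpow_nonneg hr.le (-α-1))] at this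
        linarith
      · positivity
    calc max (|C₁ * r ^ (-α) + C₂ * r ^ (-α - 1)| - μ) 0 * r ^ ((d : ℝ) - 1)
        ≤ (|C₁| * r ^ (-α) + |C₂| * r ^ (-α - 1)) * r ^ ((d : ℝ) - 1) :=
          mul_le_mul_of_nonneg_right h1 (Real.rpow_nonneg hr.le _)
      _ = |C₁| * r ^ ((d:ℝ) - α - 1) + |C₂| * r ^ ((d:ℝ) - α - 2) := by
          rw [show (d:ℝ) - α - 1 = -α + ((d:ℝ)-1) by ring,
            show (d:ℝ) - α - 2 = (-α-1) + ((d:ℝ)-1) by ring,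
            Real.rpow_add hr, Real.rpow_add hr]
          ring
  have hIntBound : IntegrableOn
      (fun r : ℝ => |C₁| * r ^ ((d:ℝ) - α - 1) + |C₂| * r ^ ((d:ℝ) - α - 2))
      (Set.Ioc 0 r₁) := by
    rw [← intervalIntegrable_iff_integrableOn_Ioc_of_le hr₁0.le]
    exact ((intervalIntegral.intervalIntegrable_rpow' (by linarith)).const_mul _).add
      ((intervalIntegral.intervalIntegrable_rpow' (by linarith)).const_mul _)
  have hIntf0 : ∀ μ : ℝ, 0 < μ → IntegrableOn
      (fun r => max (|C₁ * r ^ (-α) + C₂ * r ^ (-α - 1)| - μ) 0 * r ^ ((d : ℝ) - 1))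
      (Set.Ioc 0 r₁) := by
    intro μ hμ
    refine Integrable.mono' hIntBound
      (((hfcont μ).mono Set.Ioc_subset_Ioi_self).aestronglyMeasurable measurableSet_Ioc) ?_
    rw [MeasureTheory.ae_restrict_iff' measurableSet_Ioc]
    refine MeasureTheory.ae_of_all _ fun r hr => ?_
    rw [Real.norm_eq_abs, _root_.abs_of_nonneg (hnonneg μ r hr.1)]
    exact hbd μ hμ.le r hr.1
  set K : ℝ := ∫ r in Set.Ioc (0:ℝ) r₁,
      (|C₁| * r ^ ((d:ℝ) - α - 1) + |C₂| * r ^ ((d:ℝ) - α - 2)) with hK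
  have hEbound : ∀ μ : ℝ, 0 < μ → 0 ≤ E μ ∧ E μ ≤ K := by
    intro μ hμ
    constructor
    · exact MeasureTheory.setIntegral_nonneg measurableSet_Ioc fun r hr => hnonneg μ r hr.1
    · exact MeasureTheory.setIntegral_mono_on (hIntf0 μ hμ) hIntBound measurableSet_Ioc
        fun r hr => hbd μ hμ.le r hr.1
  -- main exact formula
  have hmain : ∀ μ : ℝ, 0 < μ → μ < g r₁ →
      (∫ r in Set.Ioi (0 : ℝ),
          max (|C₁ * r ^ (-α) + C₂ * r ^ (-α - 1)| - μ) 0 * r ^ ((d : ℝ) - 1)) =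
      c1 * C₁ * R μ ^ ((d:ℝ) - α) + c2 * C₂ * R μ ^ ((d:ℝ) - α - 1) + (E μ + c₀ μ) := by
    intro μ hμ1 hμ3
    obtain ⟨hR1, hR2⟩ := hR μ hμ1 hμ3
    have hRm0 : 0 < R μ := lt_of_lt_of_le hr₁0 hR1
    have h0uIcc : (0:ℝ) ∉ Set.uIcc r₁ (R μ) := by
      rw [Set.uIcc_of_le hR1]
      rintro ⟨h, -⟩; linarith
    have hEqMid : Set.EqOn
        (fun r => max (|C₁ * r ^ (-α) + C₂ * r ^ (-α - 1)| - μ) 0 * r ^ ((d : ℝ) - 1))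
        (fun r => C₁ * r ^ ((d:ℝ) - α - 1) + C₂ * r ^ ((d:ℝ) - α - 2) - μ * r ^ ((d:ℝ) - 1))
        (Set.Ioc r₁ (R μ)) := by
      intro r hr
      have hrr₁ : r₁ ≤ r := hr.1.le
      have hr0 : 0 < r := lt_of_lt_of_le hr₁0 hrr₁
      have hgle : μ ≤ g r := by
        have := hanti.antitoneOn hrr₁ hR1 hr.2
        rw [hR2] at this; exact this
      have habs : |C₁ * r ^ (-α) + C₂ * r ^ (-α - 1)| = g r := _root_.abs_of_pos (hgpos r hrr₁)
      simp only
      rw [habs, max_eq_left (sub_nonneg.mpr hgle)]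
      show (C₁ * r ^ (-α) + C₂ * r ^ (-α-1) - μ) * r ^ ((d:ℝ)-1) = _
      rw [show (d:ℝ) - α - 1 = -α + ((d:ℝ)-1) by ring,
        show (d:ℝ) - α - 2 = (-α-1) + ((d:ℝ)-1) by ring,
        Real.rpow_add hr0, Real.rpow_add hr0]
      ring
    have hEqOuter : Set.EqOn
        (fun r => max (|C₁ * r ^ (-α) + C₂ * r ^ (-α - 1)| - μ) 0 * r ^ ((d : ℝ) - 1))
        (fun _ => (0:ℝ)) (Set.Ioi (R μ)) := by
      intro r hr
      have hrr₁ : r₁ ≤ r := le_trans hR1 (le_of_lt hr)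
      have hgle : g r ≤ μ := by
        have := hanti hR1 hrr₁ hr
        rw [hR2] at this; exact this.le
      have habs : |C₁ * r ^ (-α) + C₂ * r ^ (-α - 1)| = g r := _root_.abs_of_pos (hgpos r hrr₁)
      simp only
      rw [habs, max_eq_right (sub_nonpos.mpr hgle), zero_mul]
    have hIm1 : IntervalIntegrable (fun x : ℝ => x ^ ((d:ℝ) - α - 1)) volume r₁ (R μ) :=
      intervalIntegral.intervalIntegrable_rpow' (by linarith)
    have hIm2 : IntervalIntegrable (fun x : ℝ => x ^ ((d:ℝ) - α - 2)) volume r₁ (R μ) :=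
      intervalIntegral.intervalIntegrable_rpow' (by linarith)
    have hIm3 : IntervalIntegrable (fun x : ℝ => x ^ ((d:ℝ) - 1)) volume r₁ (R μ) :=
      intervalIntegral.intervalIntegrable_rpow' (by linarith)
    have hIntMid : IntegrableOn
        (fun r : ℝ => C₁ * r ^ ((d:ℝ) - α - 1) + C₂ * r ^ ((d:ℝ) - α - 2) - μ * r ^ ((d:ℝ) - 1))
        (Set.Ioc r₁ (R μ)) := by
      rw [← intervalIntegrable_iff_integrableOn_Ioc_of_le hR1]
      exact ((hIm1.const_mul C₁).add (hIm2.const_mul C₂)).sub (hIm3.const_mul μ)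
    have hIntfMid := (integrableOn_congr_fun hEqMid measurableSet_Ioc).mpr hIntMid
    have hIntfOuter := (integrableOn_congr_fun hEqOuter measurableSet_Ioi).mpr
      (integrableOn_zero :
        IntegrableOn (fun _ : ℝ => (0:ℝ)) (Set.Ioi (R μ)) volume)
    have hIntfIoi : IntegrableOn
        (fun r => max (|C₁ * r ^ (-α) + C₂ * r ^ (-α - 1)| - μ) 0 * r ^ ((d : ℝ) - 1))
        (Set.Ioi r₁) := by
      rw [← Ioc_union_Ioi_eq_Ioi hR1]
      exact hIntfMid.union hIntfOuter
    rw [show Set.Ioi (0:ℝ) = Set.Ioc 0 r₁ ∪ Set.Ioi r₁ from (Ioc_union_Ioi_eq_Ioi hr₁0.le).symm,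
      setIntegral_union (Set.Ioc_disjoint_Ioi le_rfl) measurableSet_Ioi (hIntf0 μ hμ1) hIntfIoi,
      show Set.Ioi r₁ = Set.Ioc r₁ (R μ) ∪ Set.Ioi (R μ) from (Ioc_union_Ioi_eq_Ioi hR1).symm,
      setIntegral_union (Set.Ioc_disjoint_Ioi le_rfl) measurableSet_Ioi hIntfMid hIntfOuter,
      setIntegral_congr_fun measurableSet_Ioi hEqOuter, integral_zero, add_zero,
      setIntegral_congr_fun measurableSet_Ioc hEqMid,
      ← intervalIntegral.integral_of_le hR1]
    rw [intervalIntegral.integral_sub ((hIm1.const_mul C₁).add (hIm2.const_mul C₂))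
        (hIm3.const_mul μ),
      intervalIntegral.integral_add (hIm1.const_mul C₁) (hIm2.const_mul C₂),
      intervalIntegral.integral_const_mul, intervalIntegral.integral_const_mul,
      intervalIntegral.integral_const_mul,
      _root_.integral_rpow (Or.inl (by linarith : (-1:ℝ) < (d:ℝ) - α - 1)),
      _root_.integral_rpow (Or.inl (by linarith : (-1:ℝ) < (d:ℝ) - α - 2)),
      _root_.integral_rpow (Or.inl (by linarith : (-1:ℝ) < (d:ℝ) - 1))]
    rw [show (d:ℝ) - α - 1 + 1 = (d:ℝ) - α by ring,
      show (d:ℝ) - α - 2 + 1 = (d:ℝ) - α - 1 by ring,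
      show (d:ℝ) - 1 + 1 = (d:ℝ) by ring]
    have hkey : μ * R μ ^ (d:ℝ) = C₁ * R μ ^ ((d:ℝ) - α) + C₂ * R μ ^ ((d:ℝ) - α - 1) := by
      have hgr : C₁ * R μ ^ (-α) + C₂ * R μ ^ (-α-1) = μ := hR2
      have h' : (C₁ * R μ ^ (-α) + C₂ * R μ ^ (-α-1)) * R μ ^ (d:ℝ) =
          C₁ * R μ ^ ((d:ℝ) - α) + C₂ * R μ ^ ((d:ℝ) - α - 1) := by
        rw [add_mul, mul_assoc, mul_assoc, ← Real.rpow_add hRm0, ← Real.rpow_add hRm0,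
          show -α + (d:ℝ) = (d:ℝ) - α by ring, show -α - 1 + (d:ℝ) = (d:ℝ) - α - 1 by ring]
      rw [← h', hgr]
    have hs1 : 1/((d:ℝ) - α) = c1 + 1/(d:ℝ) := by
      rw [hc1]; field_simp; ring
    have hs2 : 1/((d:ℝ) - α - 1) = c2 + 1/(d:ℝ) := by
      rw [hc2]; field_simp; ring
    simp only [hc₀]
    rw [div_eq_mul_one_div (R μ ^ ((d:ℝ) - α) - r₁ ^ ((d:ℝ) - α)),
      div_eq_mul_one_div (R μ ^ ((d:ℝ) - α - 1) - r₁ ^ ((d:ℝ) - α - 1)), hs1, hs2]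
    have hc₀' : μ * r₁ ^ (d:ℝ) / (d:ℝ)
        - (C₁ * r₁ ^ ((d:ℝ) - α) / ((d:ℝ) - α)
          + C₂ * r₁ ^ ((d:ℝ) - α - 1) / ((d:ℝ) - α - 1)) =
        μ * r₁ ^ (d:ℝ) / (d:ℝ) - C₁ * r₁ ^ ((d:ℝ) - α) * (c1 + 1/(d:ℝ))
          - C₂ * r₁ ^ ((d:ℝ) - α - 1) * (c2 + 1/(d:ℝ)) := by
      rw [div_eq_mul_one_div (C₁ * r₁ ^ ((d:ℝ) - α)),
        div_eq_mul_one_div (C₂ * r₁ ^ ((d:ℝ) - α - 1)), hs1, hs2]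
      ring
    rw [hc₀']
    linear_combination (-(1/(d:ℝ))) * hkey
  clear hfcont hnonneg hbd hIntBound hIntf0 hlin hlin2 hfact hderiv hcont hsub hanti hgto
    hE hK hr₁ hmax0 hr₁1
  clear_value E c₀ K r₁
  -- little-o machinery
  have hμIoo : Set.Ioo (0:ℝ) (g r₁) ∈ 𝓝[>] (0:ℝ) :=
    Ioo_mem_nhdsGT_of_mem (left_mem_Ico.mpr hgr₁pos)
  rw [Asymptotics.isLittleO_iff_tendsto' (by
    filter_upwards [self_mem_nhdsWithin] with μ hμ h0
    exact absurd h0 (Real.rpow_pos_of_pos hμ b).ne')]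
  set K₂ : ℝ := g r₁ * r₁ ^ (d:ℝ) / d
      + |C₁ * r₁ ^ ((d:ℝ) - α) / ((d:ℝ) - α)
        + C₂ * r₁ ^ ((d:ℝ) - α - 1) / ((d:ℝ) - α - 1)| with hK₂
  have hG2 : Tendsto (fun μ => (E μ + c₀ μ) / μ ^ b) (𝓝[>] (0:ℝ)) (𝓝 0) := by
    have hlim : Tendsto (fun μ : ℝ => (K + K₂) * μ ^ (-b)) (𝓝[>] (0:ℝ)) (𝓝 0) := by
      simpa using (tendsto_rpow_zero_of_pos' (by linarith : (0:ℝ) < -b)).const_mul (K + K₂)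
    refine squeeze_zero_norm' ?_ hlim
    filter_upwards [hμIoo] with μ hμ
    have hμ1 : 0 < μ := hμ.1
    obtain ⟨hE0, hEK⟩ := hEbound μ hμ1
    have hc₀b : |c₀ μ| ≤ K₂ := by
      simp only [hc₀]
      rw [hK₂]
      refine le_trans (abs_sub _ _) ?_
      have h1 : |μ * r₁ ^ (d:ℝ) / (d:ℝ)| ≤ g r₁ * r₁ ^ (d:ℝ) / (d:ℝ) := by
        rw [abs_div, abs_mul, _root_.abs_of_nonneg (Real.rpow_nonneg hr₁0.le _),
          _root_.abs_of_pos hd0, _root_.abs_of_pos hμ1]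
        gcongr
        exact hμ.2.le
      linarith
    have habs : |E μ + c₀ μ| ≤ K + K₂ := by
      refine le_trans (abs_add_le _ _) ?_
      rw [_root_.abs_of_nonneg hE0]
      linarith
    rw [Real.norm_eq_abs, abs_div, _root_.abs_of_pos (Real.rpow_pos_of_pos hμ1 b),
      div_eq_mul_inv, ← Real.rpow_neg hμ1.le]
    exact mul_le_mul_of_nonneg_right habs (Real.rpow_nonneg hμ1.le _)
  have hG1 : Tendsto (fun μ => (c1 * C₁ * R μ ^ ((d:ℝ) - α) + c2 * C₂ * R μ ^ ((d:ℝ) - α - 1)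
      - c1 * C₁ ^ ((d:ℝ)/α) * μ ^ a - Bc * μ ^ b) / μ ^ b) (𝓝[>] (0:ℝ)) (𝓝 0) := by
    by_cases hC₂0 : C₂ = 0
    · have hBc0 : Bc = 0 := by rw [hBc, hC₂0, mul_zero]
      refine tendsto_const_nhds.congr' ?_
      filter_upwards [hμIoo] with μ hμ
      obtain ⟨hR1, hR2⟩ := hR μ hμ.1 hμ.2
      have hRm0 : 0 < R μ := lt_of_lt_of_le hr₁0 hR1
      have hgr : C₁ * R μ ^ (-α) + C₂ * R μ ^ (-α-1) = μ := hR2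
      rw [hC₂0, zero_mul, add_zero] at hgr
      have hRα : R μ ^ (-α) = μ / C₁ := by
        rw [eq_div_iff hC₁.ne']; linarith [hgr]
      have hX1 : R μ ^ ((d:ℝ) - α) = (μ / C₁) ^ a := by
        rw [show (d:ℝ) - α = -α * (((d:ℝ)-α)/(-α)) by field_simp,
          Real.rpow_mul hRm0.le, hRα,
          show ((d:ℝ)-α)/(-α) = a by rw [ha]; field_simp [hα.ne']; ring]
      have hfin : c1 * C₁ * R μ ^ ((d:ℝ) - α) = c1 * C₁ ^ ((d:ℝ)/α) * μ ^ a := by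
        rw [hX1, Real.div_rpow hμ.1.le hC₁.le,
          show ((d:ℝ)/α) = 1 - a from by rw [ha]; ring,
          Real.rpow_sub hC₁, Real.rpow_one]
        field_simp
        rw [ha]; ring_nf
      rw [hC₂0, hBc0, hfin]
      ring
    · set q : ℝ := ((d:ℝ) - α)/α with hq
      set L : ℝ := C₁ ^ α⁻¹ with hL
      have hL0 : 0 < L := Real.rpow_pos_of_pos hC₁ _
      set v : ℝ → ℝ := fun μ => C₁ + C₂ / R μ with hv
      set u : ℝ → ℝ := fun μ => (v μ) ^ α⁻¹ with hu
      set φf : ℝ → ℝ := fun μ => ((v μ) ^ q - C₁ ^ q) / (v μ - C₁) with hφf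
      have hv_t : Tendsto v (𝓝[>] (0:ℝ)) (𝓝 C₁) := by
        have h0 : Tendsto (fun μ => C₂ / R μ) (𝓝[>] (0:ℝ)) (𝓝 0) := by
          simpa [div_eq_mul_inv] using hRtop.inv_tendsto_atTop.const_mul C₂
        simpa using tendsto_const_nhds.add h0
      have hv_t' : Tendsto v (𝓝[>] (0:ℝ)) (𝓝[≠] C₁) := by
        rw [tendsto_nhdsWithin_iff]
        refine ⟨hv_t, ?_⟩
        filter_upwards [hμIoo] with μ hμ
        obtain ⟨hR1, hR2⟩ := hR μ hμ.1 hμ.2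
        have hRm0 : 0 < R μ := lt_of_lt_of_le hr₁0 hR1
        have hsubv : v μ - C₁ = C₂ / R μ := by simp only [hv]; ring
        show v μ ≠ C₁
        intro hcon
        rw [hcon] at hsubv
        exact hC₂0 ((div_eq_zero_iff.mp (by linarith [hsubv] : C₂ / R μ = 0)).resolve_right
          hRm0.ne')
      have hu_t : Tendsto u (𝓝[>] (0:ℝ)) (𝓝 L) :=
        (Real.continuousAt_rpow_const C₁ α⁻¹ (Or.inl hC₁.ne')).tendsto.comp hv_t
      have hφ_t : Tendsto φf (𝓝[>] (0:ℝ)) (𝓝 (q * C₁ ^ (q-1))) := by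
        have hder : HasDerivAt (fun x : ℝ => x ^ q) (q * C₁ ^ (q-1)) C₁ :=
          Real.hasDerivAt_rpow_const (Or.inl hC₁.ne')
        have hsl := hasDerivAt_iff_tendsto_slope.mp hder
        refine (hsl.comp hv_t').congr fun μ => ?_
        simp only [Function.comp_apply, hφf]
        rw [slope_def_field]
      have hup2_t : Tendsto (fun μ => u μ ^ ((d:ℝ) - α - 1)) (𝓝[>] (0:ℝ))
          (𝓝 (L ^ ((d:ℝ) - α - 1))) :=
        (Real.continuousAt_rpow_const L _ (Or.inl hL0.ne')).tendsto.comp hu_t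
      have hQt : Tendsto (fun μ => c1 * C₁ * C₂ * φf μ / u μ + c2 * C₂ * u μ ^ ((d:ℝ) - α - 1)
          - Bc) (𝓝[>] (0:ℝ))
          (𝓝 (c1 * C₁ * C₂ * (q * C₁ ^ (q-1)) / L + c2 * C₂ * L ^ ((d:ℝ) - α - 1) - Bc)) :=
        (((hφ_t.const_mul (c1 * C₁ * C₂)).div hu_t hL0.ne').add
          (hup2_t.const_mul (c2 * C₂))).sub tendsto_const_nhds
      have hX₀ : c1 * C₁ * C₂ * (q * C₁ ^ (q-1)) / L + c2 * C₂ * L ^ ((d:ℝ) - α - 1) - Bc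
          = 0 := by
        have e1 : C₁ * C₁ ^ (q - 1) = C₁ ^ q := by
          nth_rewrite 1 [← Real.rpow_one C₁]
          rw [← Real.rpow_add hC₁]
          norm_num
        have e2 : C₁ ^ q / L = C₁ ^ (((d:ℝ) - α - 1)/α) := by
          rw [hL, ← Real.rpow_sub hC₁, show q - α⁻¹ = ((d:ℝ) - α - 1)/α by
            rw [hq]; field_simp]
        have e3 : L ^ ((d:ℝ) - α - 1) = C₁ ^ (((d:ℝ) - α - 1)/α) := by
          rw [hL, ← Real.rpow_mul hC₁.le, show α⁻¹ * ((d:ℝ) - α - 1) = ((d:ℝ) - α - 1)/α by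
            field_simp]
        have e4 : c1 * C₁ * C₂ * (q * C₁ ^ (q-1)) / L
            = (q * c1) * C₂ * C₁ ^ (((d:ℝ) - α - 1)/α) := by
          rw [← e2, ← e1]
          field_simp
        have e5 : q * c1 + c2 = 1 / ((d:ℝ) - α - 1) := by
          rw [hq, hc1, hc2]
          field_simp
          ring
        rw [e4, e3, hBc]
        linear_combination (C₂ * C₁ ^ (((d:ℝ) - α - 1)/α)) * e5
      rw [hX₀] at hQt
      refine hQt.congr' ?_
      filter_upwards [hμIoo] with μ hμ
      obtain ⟨hR1, hR2⟩ := hR μ hμ.1 hμ.2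
      have hRm0 : 0 < R μ := lt_of_lt_of_le hr₁0 hR1
      have hgr : C₁ * R μ ^ (-α) + C₂ * R μ ^ (-α-1) = μ := hR2
      have hvalt : v μ = μ * R μ ^ α := by
        have h' : (C₁ * R μ ^ (-α) + C₂ * R μ ^ (-α-1)) * R μ ^ α = C₁ + C₂ / R μ := by
          rw [add_mul, mul_assoc, mul_assoc, ← Real.rpow_add hRm0, ← Real.rpow_add hRm0,
            show -α + α = (0:ℝ) by ring, show -α - 1 + α = (-1:ℝ) by ring, Real.rpow_zero,
            Real.rpow_neg_one, mul_one, div_eq_mul_inv]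
        simp only [hv]
        rw [← h', hgr]
      have hv0 : 0 < v μ := by rw [hvalt]; exact mul_pos hμ.1 (Real.rpow_pos_of_pos hRm0 _)
      have hu0 : 0 < u μ := Real.rpow_pos_of_pos hv0 _
      have hvne : v μ - C₁ ≠ 0 := by
        have hsubv : v μ - C₁ = C₂ / R μ := by simp only [hv]; ring
        rw [hsubv]
        exact div_ne_zero hC₂0 hRm0.ne'
      have huRm : u μ = μ ^ α⁻¹ * R μ := by
        simp only [hu]
        rw [hvalt, Real.mul_rpow hμ.1.le (Real.rpow_nonneg hRm0.le _),
          ← Real.rpow_mul hRm0.le, mul_inv_cancel₀ hα.ne', Real.rpow_one]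
      have hRmu : R μ = u μ * μ ^ (-α⁻¹) := by
        rw [huRm, mul_comm (μ ^ α⁻¹) (R μ), mul_assoc, ← Real.rpow_add hμ.1,
          show α⁻¹ + -α⁻¹ = (0:ℝ) by ring, Real.rpow_zero, mul_one]
      have hmab : μ ^ (a - b) = R μ / u μ := by
        rw [eq_div_iff hu0.ne', hab, huRm, ← mul_assoc, ← Real.rpow_add hμ.1,
          show -α⁻¹ + α⁻¹ = (0:ℝ) by ring, Real.rpow_zero, one_mul]
      have hRp1 : R μ ^ ((d:ℝ) - α) = u μ ^ ((d:ℝ) - α) * μ ^ a := by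
        rw [hRmu, Real.mul_rpow hu0.le (Real.rpow_nonneg hμ.1.le _),
          ← Real.rpow_mul hμ.1.le,
          show -α⁻¹ * ((d:ℝ) - α) = a by rw [ha]; field_simp; ring]
      have hRp2 : R μ ^ ((d:ℝ) - α - 1) = u μ ^ ((d:ℝ) - α - 1) * μ ^ b := by
        rw [hRmu, Real.mul_rpow hu0.le (Real.rpow_nonneg hμ.1.le _),
          ← Real.rpow_mul hμ.1.le,
          show -α⁻¹ * ((d:ℝ) - α - 1) = b by rw [hb]; field_simp; ring]
      have hAq : C₁ ^ ((d:ℝ)/α) = C₁ ^ q * C₁ := by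
        rw [show (d:ℝ)/α = q + 1 by rw [hq]; field_simp; ring, Real.rpow_add hC₁, Real.rpow_one]
      have huq : u μ ^ ((d:ℝ) - α) = v μ ^ q := by
        simp only [hu]
        rw [← Real.rpow_mul hv0.le, show α⁻¹ * ((d:ℝ) - α) = q by rw [hq]; field_simp]
      have hμab' : μ ^ a = μ ^ (a-b) * μ ^ b := by
        rw [← Real.rpow_add hμ.1]
        congr 1
        ring
      have hφmul : v μ ^ q - C₁ ^ q = φf μ * (v μ - C₁) := by
        simp only [hφf]
        rw [div_mul_cancel₀ _ hvne]
      have hsubv : v μ - C₁ = C₂ / R μ := by simp only [hv]; ring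
      have hnum : c1 * C₁ * (v μ ^ q - C₁ ^ q) * μ ^ (a-b) = c1 * C₁ * C₂ * φf μ / u μ := by
        rw [hφmul, hsubv, hmab]
        field_simp
      rw [hRp1, hRp2, hAq, huq, hμab', ← hnum]
      field_simp [(Real.rpow_pos_of_pos hμ.1 b).ne']
      ring
  have hsum := hG1.add hG2
  rw [add_zero] at hsum
  refine hsum.congr' ?_
  filter_upwards [hμIoo] with μ hμ
  rw [hmain μ hμ.1 hμ.2]
  ring

private lemma zero_case {d : ℕ} (hd : 2 ≤ d) {α : ℝ} (hα : 0 < α) (hαd : α < (d:ℝ) - 1)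
    (C₂ : ℝ) :
    (fun μ : ℝ => ∫ r in Set.Ioi (0 : ℝ),
        max (|C₂ * r ^ (-α - 1)| - μ) 0 * r ^ ((d : ℝ) - 1))
      =o[𝓝[>] (0 : ℝ)] fun μ => μ ^ (1 - ((d : ℝ) - 1) / α) := by
  have hd2 : (2:ℝ) ≤ (d:ℝ) := by exact_mod_cast hd
  by_cases hC₂ : C₂ = 0
  · subst hC₂
    refine EventuallyEq.trans_isLittleO ?_ (isLittleO_zero _ _)
    filter_upwards [self_mem_nhdsWithin] with μ hμ
    have : ∀ r : ℝ, max (|(0:ℝ) * r ^ (-α - 1)| - μ) 0 * r ^ ((d : ℝ) - 1) = 0 := by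
      intro r
      rw [zero_mul, abs_zero, zero_sub, max_eq_right (by linarith [mem_Ioi.mp hμ] : -μ ≤ 0),
        zero_mul]
    simp only [this, integral_zero]
  · have hC₂' : 0 < |C₂| := abs_pos.mpr hC₂
    set b : ℝ := 1 - ((d:ℝ) - 1)/α with hb
    set k : ℝ := (d:ℝ) / (α + 1) with hk
    have hα1 : 0 < α + 1 := by linarith
    have hq2 : (-1:ℝ) < (d:ℝ) - α - 2 := by linarith
    have hdm1 : (-1:ℝ) < (d:ℝ) - 1 := by linarith
    have hda1 : (0:ℝ) < (d:ℝ) - α - 1 := by linarith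
    have hd0 : (0:ℝ) < (d:ℝ) := by linarith
    -- eventual exact formula
    have hmain : ∀ μ : ℝ, 0 < μ →
        (∫ r in Set.Ioi (0 : ℝ), max (|C₂ * r ^ (-α - 1)| - μ) 0 * r ^ ((d : ℝ) - 1)) =
        (1/((d:ℝ) - α - 1) - 1/(d:ℝ)) * |C₂| ^ k * μ ^ (1 - k) := by
      intro μ hμ
      set T : ℝ := (|C₂|/μ) ^ ((α+1)⁻¹) with hT
      have hTpos : 0 < T := Real.rpow_pos_of_pos (div_pos hC₂' hμ) _
      have hTval : |C₂| * T ^ (-α - 1) = μ := by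
        rw [hT, ← Real.rpow_mul (div_pos hC₂' hμ).le,
          show (α+1)⁻¹ * (-α - 1) = -1 by field_simp; ring,
          Real.rpow_neg_one, inv_div, mul_div_cancel₀ _ (ne_of_gt hC₂')]
      set f : ℝ → ℝ := fun r => max (|C₂ * r ^ (-α - 1)| - μ) 0 * r ^ ((d : ℝ) - 1) with hf
      set nice : ℝ → ℝ := fun r => |C₂| * r ^ ((d:ℝ) - α - 2) - μ * r ^ ((d:ℝ) - 1) with hnice
      have habs : ∀ r : ℝ, 0 < r → |C₂ * r ^ (-α - 1)| = |C₂| * r ^ (-α - 1) := fun r hr => by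
        rw [abs_mul, _root_.abs_of_nonneg (Real.rpow_nonneg hr.le _)]
      have hEq1 : EqOn f nice (Ioc 0 T) := by
        intro r hr
        obtain ⟨hr0, hrT⟩ := hr
        have hge : μ ≤ |C₂| * r ^ (-α - 1) := by
          have h1 : T ^ (-α - 1) ≤ r ^ (-α - 1) :=
            Real.rpow_le_rpow_of_nonpos hr0 hrT (by linarith)
          have := mul_le_mul_of_nonneg_left h1 hC₂'.le
          linarith [hTval]
        simp only [hf, hnice, habs r hr0]
        rw [max_eq_left (sub_nonneg.mpr hge), sub_mul, mul_assoc, ← Real.rpow_add hr0,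
          show -α - 1 + ((d:ℝ) - 1) = (d:ℝ) - α - 2 by ring]
      have hEq2 : EqOn f (fun _ => (0:ℝ)) (Ioi T) := by
        intro r hr
        have hrT : T ≤ r := le_of_lt hr
        have hle : |C₂| * r ^ (-α - 1) ≤ μ := by
          have h1 : r ^ (-α - 1) ≤ T ^ (-α - 1) :=
            Real.rpow_le_rpow_of_nonpos hTpos hrT (by linarith)
          have := mul_le_mul_of_nonneg_left h1 hC₂'.le
          linarith [hTval]
        show f r = 0
        simp only [hf, habs r (lt_trans hTpos hr)]
        rw [max_eq_right (sub_nonpos.mpr hle), zero_mul]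
      have hInt1 : IntegrableOn nice (Ioc 0 T) := by
        rw [← intervalIntegrable_iff_integrableOn_Ioc_of_le hTpos.le]
        exact ((intervalIntegral.intervalIntegrable_rpow' hq2).const_mul |C₂|).sub
          ((intervalIntegral.intervalIntegrable_rpow' hdm1).const_mul μ)
      have hIntf1 : IntegrableOn f (Ioc 0 T) :=
        (integrableOn_congr_fun hEq1 measurableSet_Ioc).mpr hInt1
      have hIntf2 : IntegrableOn f (Ioi T) :=
        (integrableOn_congr_fun hEq2 measurableSet_Ioi).mpr integrableOn_zero
      have hsplit : Set.Ioi (0:ℝ) = Set.Ioc 0 T ∪ Set.Ioi T :=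
        (Ioc_union_Ioi_eq_Ioi hTpos.le).symm
      rw [show (∫ r in Set.Ioi (0 : ℝ),
            max (|C₂ * r ^ (-α - 1)| - μ) 0 * r ^ ((d : ℝ) - 1)) = ∫ r in Set.Ioi (0:ℝ), f r
          from rfl, hsplit,
        setIntegral_union (Set.Ioc_disjoint_Ioi le_rfl) measurableSet_Ioi hIntf1 hIntf2,
        setIntegral_congr_fun measurableSet_Ioi hEq2, integral_zero, add_zero,
        setIntegral_congr_fun measurableSet_Ioc hEq1,
        ← intervalIntegral.integral_of_le hTpos.le]
      rw [intervalIntegral.integral_sub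
          ((intervalIntegral.intervalIntegrable_rpow' hq2).const_mul |C₂|)
          ((intervalIntegral.intervalIntegrable_rpow' hdm1).const_mul μ),
        intervalIntegral.integral_const_mul, intervalIntegral.integral_const_mul,
        _root_.integral_rpow (Or.inl hq2),
        _root_.integral_rpow (Or.inl hdm1)]
      rw [show (d:ℝ) - α - 2 + 1 = (d:ℝ) - α - 1 by ring, show (d:ℝ) - 1 + 1 = (d:ℝ) by ring,
        Real.zero_rpow (ne_of_gt hda1), Real.zero_rpow (ne_of_gt hd0), sub_zero, sub_zero]
      -- now : |C₂| * (T ^ (d-α-1) / (d-α-1)) - μ * (T ^ d / d) = RHS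
      have h1 : |C₂| * T ^ ((d:ℝ) - α - 1) = μ * T ^ (d:ℝ) := by
        rw [show (d:ℝ) - α - 1 = -α - 1 + (d:ℝ) by ring, Real.rpow_add hTpos, ← mul_assoc,
          hTval]
      have h2 : T ^ (d:ℝ) = |C₂| ^ k / μ ^ k := by
        rw [hT, ← Real.rpow_mul (div_pos hC₂' hμ).le,
          show (α+1)⁻¹ * (d:ℝ) = k by rw [hk]; field_simp,
          Real.div_rpow hC₂'.le hμ.le]
      have h3 : μ * (|C₂| ^ k / μ ^ k) = |C₂| ^ k * μ ^ (1 - k) := by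
        rw [Real.rpow_sub hμ, Real.rpow_one]; ring
      have h4 : μ * T ^ (d:ℝ) = |C₂| ^ k * μ ^ (1 - k) := by rw [h2]; exact h3
      calc |C₂| * (T ^ ((d:ℝ) - α - 1) / ((d:ℝ) - α - 1)) - μ * (T ^ (d:ℝ) / (d:ℝ))
          = (μ * T ^ (d:ℝ)) * (1/((d:ℝ) - α - 1)) - (μ * T ^ (d:ℝ)) * (1/(d:ℝ)) := by
            linear_combination (1/((d:ℝ)-α-1)) * h1
        _ = _ := by rw [h4]; ring
    -- now the isLittleO
    have hne : ∀ᶠ μ in 𝓝[>] (0:ℝ), μ ^ b = 0 →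
        (∫ r in Set.Ioi (0 : ℝ), max (|C₂ * r ^ (-α - 1)| - μ) 0 * r ^ ((d : ℝ) - 1)) = 0 := by
      filter_upwards [self_mem_nhdsWithin] with μ hμ h0
      exact absurd h0 (Real.rpow_pos_of_pos hμ _).ne'
    rw [Asymptotics.isLittleO_iff_tendsto' hne]
    have hexp : 0 < 1 - k - b := by
      have : 1 - k - b = ((d:ℝ) - α - 1)/(α*(α+1)) := by
        rw [hk, hb]; field_simp; ring
      rw [this]; positivity
    have hten : Tendsto (fun μ : ℝ => (1/((d:ℝ) - α - 1) - 1/(d:ℝ)) * |C₂| ^ k * μ ^ (1 - k - b))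
        (𝓝[>] (0:ℝ)) (𝓝 0) := by
      simpa using (tendsto_rpow_zero_of_pos' hexp).const_mul
        ((1/((d:ℝ) - α - 1) - 1/(d:ℝ)) * |C₂| ^ k)
    refine hten.congr' ?_
    filter_upwards [self_mem_nhdsWithin] with μ hμ
    rw [hmain μ hμ, Real.rpow_sub hμ (1-k) b]
    ring

theorem riesz_means_radial_integral_asymptotics
    {d : ℕ} (hd : 2 ≤ d) (α : ℝ) (hα : 0 < α) (hαd : α < (d : ℝ) - 1)
    (C₁ C₂ : ℝ) :
    (fun μ : ℝ =>
        (∫ r in Set.Ioi (0 : ℝ),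
            max (|C₁ * r ^ (-α) + C₂ * r ^ (-α - 1)| - μ) 0 * r ^ ((d : ℝ) - 1))
          - α / (d * ((d : ℝ) - α)) * |C₁| ^ ((d : ℝ) / α) * μ ^ (1 - (d : ℝ) / α)
          - 1 / ((d : ℝ) - α - 1) * Real.sign C₁ * |C₁| ^ (((d : ℝ) - α - 1) / α) * C₂ *
              μ ^ (1 - ((d : ℝ) - 1) / α))
      =o[𝓝[>] (0 : ℝ)] fun μ => μ ^ (1 - ((d : ℝ) - 1) / α) := by
  have hd2 : (2:ℝ) ≤ (d:ℝ) := by exact_mod_cast hd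
  rcases lt_trichotomy C₁ 0 with h | h | h
  · have key := pos_case hd hα hαd (neg_pos.mpr h) (-C₂)
    simp only [Real.sign_of_neg h, abs_of_neg h]
    have hint : ∀ μ : ℝ, (∫ r in Set.Ioi (0 : ℝ),
            max (|C₁ * r ^ (-α) + C₂ * r ^ (-α - 1)| - μ) 0 * r ^ ((d : ℝ) - 1)) =
        (∫ r in Set.Ioi (0 : ℝ),
            max (|(-C₁) * r ^ (-α) + (-C₂) * r ^ (-α - 1)| - μ) 0 * r ^ ((d : ℝ) - 1)) := by
      intro μ
      congr 1
      ext r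
      rw [show (-C₁) * r ^ (-α) + (-C₂) * r ^ (-α-1) = -(C₁ * r ^ (-α) + C₂ * r ^ (-α-1))
        by ring, abs_neg]
    refine key.congr' ?_ (by rfl)
    filter_upwards with μ
    rw [hint μ]
    ring
  · subst h
    have hdα : (0:ℝ) < (d:ℝ)/α := div_pos (by linarith) hα
    simp only [zero_mul, zero_add, abs_zero, Real.sign_zero, Real.zero_rpow (ne_of_gt hdα),
      mul_zero, sub_zero]
    exact zero_case hd hα hαd C₂
  · have key := pos_case hd hα hαd h C₂
    simp only [Real.sign_of_pos h, abs_of_pos h]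
    refine key.congr' ?_ (by rfl)
    filter_upwards with μ
    ring
end

section
/- Let d ≥ 2, α > 0, C₁ > 0 and C₂ ≥ 0, and for μ > 0 let h(r) = C₁ r^{-α} + C₂ r^{-α-1} on (0,∞). Then h is strictly decreasing from +∞ to 0, so the equation h(r) = μ has a unique solution r⁺(μ) ∈ (0,∞), and r⁺(μ) = C₁^{1/α} μ^{-1/α} + C₂/(α C₁) + o(1) as μ → 0⁺. -/
open MeasureTheory Complex Filter Metric Set Asymptotics
open scoped Topology

private lemma aux1 {α : ℝ} (t : ℝ) :
    Tendsto (fun s : ℝ => s * ((1 + t / s) ^ (-α) - 1)) atTop (𝓝 (-α * t)) := by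
  rcases eq_or_ne t 0 with rfl | ht
  · simpa using (tendsto_const_nhds : Tendsto (fun _ : ℝ => (0:ℝ)) atTop (𝓝 0))
  · have h1 : HasDerivAt (fun x : ℝ => 1 + x) 1 0 := by
      simpa using (hasDerivAt_id (0:ℝ)).const_add 1
    have hf : HasDerivAt (fun x : ℝ => (1 + x) ^ (-α)) (-α) 0 := by
      have h2 : HasDerivAt (fun x : ℝ => x ^ (-α)) (-α * 1 ^ (-α - 1)) ((1:ℝ) + 0) := by
        rw [add_zero]
        exact Real.hasDerivAt_rpow_const (Or.inl one_ne_zero)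
      have := h2.comp 0 h1
      simpa [Function.comp_def] using this
    have hslope := hasDerivAt_iff_tendsto_slope.mp hf
    have hts0 : Tendsto (fun s : ℝ => t / s) atTop (𝓝 0) :=
      tendsto_const_nhds.div_atTop tendsto_id
    have htds : Tendsto (fun s : ℝ => t / s) atTop (𝓝[≠] (0:ℝ)) := by
      rw [tendsto_nhdsWithin_iff]
      refine ⟨hts0, ?_⟩
      filter_upwards [eventually_gt_atTop (0:ℝ)] with s hs
      exact div_ne_zero ht hs.ne'
    have hcomp := (hslope.comp htds).const_mul t
    have key : Tendsto (fun s : ℝ => s * ((1 + t / s) ^ (-α) - 1)) atTop (𝓝 (t * -α)) := by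
      refine hcomp.congr' ?_
      filter_upwards [eventually_gt_atTop (0:ℝ)] with s hs
      simp only [Function.comp, slope_def_field]
      rw [sub_zero]
      have : ((1:ℝ) + 0) ^ (-α) = 1 := by norm_num
      rw [this]
      field_simp
    simpa [mul_comm] using key

private lemma auxG {α C₁ C₂ : ℝ} (hα : 0 < α) (hC₁ : 0 < C₁) (t : ℝ) :
    Tendsto (fun s : ℝ => s * ((1 + t / s) ^ (-α) - 1) + (C₂ / C₁) * (1 + t / s) ^ (-α - 1))
      atTop (𝓝 (C₂ / C₁ - α * t)) := by
  have h1 := aux1 (α := α) t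
  have hts : Tendsto (fun s : ℝ => 1 + t / s) atTop (𝓝 1) := by
    have h0 : Tendsto (fun s : ℝ => t / s) atTop (𝓝 0) :=
      tendsto_const_nhds.div_atTop tendsto_id
    simpa using (tendsto_const_nhds (x := (1:ℝ)) (f := atTop)).add h0
  have hc : ContinuousAt (fun x : ℝ => x ^ (-α - 1)) 1 :=
    Real.continuousAt_rpow_const 1 _ (Or.inl one_ne_zero)
  have h2 : Tendsto (fun s : ℝ => (C₂ / C₁) * (1 + t / s) ^ (-α - 1)) atTop
      (𝓝 (C₂ / C₁)) := by
    have := (hc.tendsto.comp hts).const_mul (C₂ / C₁)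
    simpa using this
  have := h1.add h2
  have heq : -α * t + C₂ / C₁ = C₂ / C₁ - α * t := by ring
  rwa [heq] at this

private lemma key_id {α C₁ C₂ : ℝ} (hC₁ : 0 < C₁) {t s : ℝ} (hs : 0 < s)
    (hst : 0 < s + t) :
    C₁ * (s + t) ^ (-α) + C₂ * (s + t) ^ (-α - 1) - C₁ * s ^ (-α)
      = C₁ * s ^ (-α - 1) *
        (s * ((1 + t / s) ^ (-α) - 1) + (C₂ / C₁) * (1 + t / s) ^ (-α - 1)) := by
  have h0 : (1:ℝ) + t / s = (s + t) / s := by field_simp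
  have e1 : (s + t) ^ (-α) = s ^ (-α) * (1 + t / s) ^ (-α) := by
    rw [h0, ← Real.mul_rpow hs.le (by positivity)]
    congr 1
    field_simp
  have e2 : (s + t) ^ (-α - 1) = s ^ (-α - 1) * (1 + t / s) ^ (-α - 1) := by
    rw [h0, ← Real.mul_rpow hs.le (by positivity)]
    congr 1
    field_simp
  have e3 : s ^ (-α - 1) * s = s ^ (-α) := by
    rw [← Real.rpow_add_one hs.ne' (-α - 1)]
    norm_num
  rw [e1, e2, ← e3]
  field_simp
  ring

theorem unique_root_asymptotics_nonneg_C2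
    {d : ℕ} (hd : 2 ≤ d) (α : ℝ) (hα : 0 < α)
    (C₁ C₂ : ℝ) (hC₁ : 0 < C₁) (hC₂ : 0 ≤ C₂)
    (h : ℝ → ℝ) (hh : ∀ r : ℝ, 0 < r → h r = C₁ * r ^ (-α) + C₂ * r ^ (-α - 1)) :
    StrictAntiOn h (Set.Ioi 0) ∧
    Tendsto h (𝓝[>] (0 : ℝ)) atTop ∧
    Tendsto h atTop (𝓝 0) ∧
    ∃ rp : ℝ → ℝ,
      (∀ μ : ℝ, 0 < μ →
        (0 < rp μ ∧ h (rp μ) = μ ∧ ∀ r : ℝ, 0 < r → h r = μ → r = rp μ)) ∧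
      Tendsto (fun μ : ℝ => rp μ - C₁ ^ (1 / α) * μ ^ (-1 / α) - C₂ / (α * C₁))
        (𝓝[>] (0 : ℝ)) (𝓝 0) := by
  -- strict antitonicity
  have hmono : StrictAntiOn h (Set.Ioi (0:ℝ)) := by
    intro x hx y hy hxy
    rw [hh x hx, hh y hy]
    have h1 : y ^ (-α) < x ^ (-α) :=
      Real.rpow_lt_rpow_of_neg hx hxy (by linarith)
    have h2 : y ^ (-α - 1) ≤ x ^ (-α - 1) :=
      Real.rpow_le_rpow_of_nonpos hx hxy.le (by linarith)
    have := mul_lt_mul_of_pos_left h1 hC₁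
    have := mul_le_mul_of_nonneg_left h2 hC₂
    linarith
  -- tendsto at 0+
  have htop : Tendsto h (𝓝[>] (0:ℝ)) atTop := by
    have base : Tendsto (fun r : ℝ => r ^ (-α)) (𝓝[>] (0:ℝ)) atTop := by
      have := (tendsto_rpow_atTop hα).comp tendsto_inv_nhdsGT_zero
      refine this.congr' ?_
      filter_upwards [self_mem_nhdsWithin] with r hr
      have hr' : (0:ℝ) < r := hr
      simp only [Function.comp]
      rw [Real.inv_rpow hr'.le, ← Real.rpow_neg hr'.le]
    have base' : Tendsto (fun r : ℝ => C₁ * r ^ (-α)) (𝓝[>] (0:ℝ)) atTop :=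
      base.const_mul_atTop hC₁
    refine tendsto_atTop_mono' _ ?_ base'
    filter_upwards [self_mem_nhdsWithin] with r hr
    have hr' : (0:ℝ) < r := hr
    rw [hh r hr']
    have : 0 ≤ C₂ * r ^ (-α - 1) := by positivity
    linarith
  -- tendsto at infinity
  have hzero : Tendsto h atTop (𝓝 0) := by
    have h1 := (tendsto_rpow_neg_atTop hα).const_mul C₁
    have h2 := (tendsto_rpow_neg_atTop (show (0:ℝ) < α + 1 by linarith)).const_mul C₂
    have hsum := h1.add h2
    rw [mul_zero, mul_zero, add_zero] at hsum
    refine hsum.congr' ?_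
    filter_upwards [eventually_gt_atTop (0:ℝ)] with r hr
    rw [hh r hr, show -(α + 1) = -α - 1 from by ring]
  -- existence of roots
  have hcont : ∀ x : ℝ, 0 < x → ContinuousAt h x := by
    intro x hx
    have hc : ContinuousAt (fun r : ℝ => C₁ * r ^ (-α) + C₂ * r ^ (-α - 1)) x := by
      have c1 : ContinuousAt (fun r : ℝ => r ^ (-α)) x :=
        Real.continuousAt_rpow_const x _ (Or.inl hx.ne')
      have c2 : ContinuousAt (fun r : ℝ => r ^ (-α - 1)) x :=
        Real.continuousAt_rpow_const x _ (Or.inl hx.ne')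
      exact ((c1.const_smul C₁).add (c2.const_smul C₂))
    refine hc.congr ?_
    filter_upwards [isOpen_Ioi.eventually_mem (Set.mem_Ioi.mpr hx)] with r hr
    exact (hh r hr).symm
  have hex : ∀ μ : ℝ, 0 < μ → ∃ r : ℝ, 0 < r ∧ h r = μ := by
    intro μ hμ
    obtain ⟨a, ha, ha0⟩ : ∃ a : ℝ, μ < h a ∧ 0 < a := by
      have := (htop.eventually (eventually_gt_atTop μ)).and self_mem_nhdsWithin
      obtain ⟨a, h1, h2⟩ := this.exists
      exact ⟨a, h1, h2⟩
    obtain ⟨b, hb, hab⟩ : ∃ b : ℝ, h b < μ ∧ a < b := by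
      have := (hzero.eventually_lt_const hμ).and (eventually_gt_atTop a)
      obtain ⟨b, h1, h2⟩ := this.exists
      exact ⟨b, h1, h2⟩
    have hco : ContinuousOn h (Set.Icc a b) := fun x hx =>
      (hcont x (lt_of_lt_of_le ha0 hx.1)).continuousWithinAt
    have : μ ∈ Set.Icc (h b) (h a) := ⟨hb.le, ha.le⟩
    obtain ⟨r, hr, hrμ⟩ := intermediate_value_Icc' hab.le hco this
    exact ⟨r, lt_of_lt_of_le ha0 hr.1, hrμ⟩
  classical
  set rp : ℝ → ℝ := fun μ => if hμ : 0 < μ then (hex μ hμ).choose else 1 with hrp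
  have hrp_pos : ∀ μ : ℝ, 0 < μ → 0 < rp μ := by
    intro μ hμ; rw [hrp]; simp only [dif_pos hμ]; exact (hex μ hμ).choose_spec.1
  have hrp_eq : ∀ μ : ℝ, 0 < μ → h (rp μ) = μ := by
    intro μ hμ; rw [hrp]; simp only [dif_pos hμ]; exact (hex μ hμ).choose_spec.2
  have hrp_uniq : ∀ μ : ℝ, 0 < μ → ∀ r : ℝ, 0 < r → h r = μ → r = rp μ := by
    intro μ hμ r hr hrμ
    exact hmono.injOn hr (hrp_pos μ hμ) (by rw [hrμ, hrp_eq μ hμ])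
  refine ⟨hmono, htop, hzero, rp, fun μ hμ => ⟨hrp_pos μ hμ, hrp_eq μ hμ, hrp_uniq μ hμ⟩, ?_⟩
  -- asymptotics
  set c : ℝ := C₂ / (α * C₁) with hc_def
  set sf : ℝ → ℝ := fun μ => C₁ ^ (1 / α) * μ ^ (-1 / α) with hsf
  have hsf_pos : ∀ μ : ℝ, 0 < μ → 0 < sf μ := by
    intro μ hμ
    exact mul_pos (Real.rpow_pos_of_pos hC₁ _) (Real.rpow_pos_of_pos hμ _)
  have hsf_top : Tendsto sf (𝓝[>] (0:ℝ)) atTop := by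
    have h1 : Tendsto (fun μ : ℝ => μ ^ (-1 / α)) (𝓝[>] (0:ℝ)) atTop := by
      have := (tendsto_rpow_atTop (show (0:ℝ) < 1 / α by positivity)).comp
        tendsto_inv_nhdsGT_zero
      refine this.congr' ?_
      filter_upwards [self_mem_nhdsWithin] with μ hμ
      have hμ' : (0:ℝ) < μ := hμ
      simp only [Function.comp]
      rw [Real.inv_rpow hμ'.le, ← Real.rpow_neg hμ'.le]
      congr 1
      ring
    exact h1.const_mul_atTop (Real.rpow_pos_of_pos hC₁ _)
  have hsf_eq : ∀ μ : ℝ, 0 < μ → C₁ * (sf μ) ^ (-α) = μ := by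
    intro μ hμ
    rw [hsf]
    simp only
    rw [Real.mul_rpow (Real.rpow_pos_of_pos hC₁ _).le (Real.rpow_pos_of_pos hμ _).le,
      ← Real.rpow_mul hC₁.le, ← Real.rpow_mul hμ.le]
    have ha1 : 1 / α * -α = -1 := by field_simp
    have ha2 : -1 / α * -α = 1 := by field_simp
    rw [ha1, ha2, Real.rpow_neg_one, Real.rpow_one]
    field_simp
  rw [Metric.tendsto_nhds]
  intro ε hε
  have hαc : α * c = C₂ / C₁ := by
    rw [hc_def]; field_simp
  -- eventual bounds in s
  have hE1 : ∀ᶠ s : ℝ in atTop,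
      C₁ * (s + (c + ε)) ^ (-α) + C₂ * (s + (c + ε)) ^ (-α - 1) < C₁ * s ^ (-α) := by
    have hlim := auxG (C₂ := C₂) hα hC₁ (c + ε)
    have hneg : C₂ / C₁ - α * (c + ε) < 0 := by
      rw [mul_add, hαc]; nlinarith
    filter_upwards [hlim.eventually_lt_const hneg, eventually_gt_atTop (0:ℝ),
      eventually_gt_atTop (-(c + ε))] with s hGs hs hst
    have hst' : 0 < s + (c + ε) := by linarith
    have := key_id (α := α) (C₂ := C₂) hC₁ hs hst' (t := c + ε)
    nlinarith [Real.rpow_pos_of_pos hs (-α - 1), mul_pos hC₁ (Real.rpow_pos_of_pos hs (-α - 1))]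
  have hE2 : ∀ᶠ s : ℝ in atTop,
      C₁ * s ^ (-α) < C₁ * (s + (c - ε)) ^ (-α) + C₂ * (s + (c - ε)) ^ (-α - 1) := by
    have hlim := auxG (C₂ := C₂) hα hC₁ (c - ε)
    have hpos : 0 < C₂ / C₁ - α * (c - ε) := by
      rw [mul_sub, hαc]; nlinarith
    filter_upwards [hlim.eventually_const_lt hpos, eventually_gt_atTop (0:ℝ),
      eventually_gt_atTop (-(c - ε))] with s hGs hs hst
    have hst' : 0 < s + (c - ε) := by linarith
    have := key_id (α := α) (C₂ := C₂) hC₁ hs hst' (t := c - ε)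
    nlinarith [Real.rpow_pos_of_pos hs (-α - 1), mul_pos hC₁ (Real.rpow_pos_of_pos hs (-α - 1))]
  have hE3 : ∀ᶠ s : ℝ in atTop, 0 < s + (c - ε) := by
    filter_upwards [eventually_gt_atTop (-(c - ε))] with s hs using by linarith
  have hall := hsf_top.eventually (hE1.and (hE2.and hE3))
  filter_upwards [hall, self_mem_nhdsWithin] with μ hμall hμ
  have hμ' : (0:ℝ) < μ := hμ
  obtain ⟨e1, e2, e3⟩ := hμall
  set s := sf μ with hs_def
  have hs_pos : 0 < s := hsf_pos μ hμ'
  have hse : C₁ * s ^ (-α) = μ := hsf_eq μ hμ'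
  have hst1 : 0 < s + (c + ε) := by linarith
  have hup : h (s + (c + ε)) < h (rp μ) := by
    rw [hh _ hst1, hrp_eq μ hμ', ← hse]; exact e1
  have hdown : h (rp μ) < h (s + (c - ε)) := by
    rw [hh _ e3, hrp_eq μ hμ', ← hse]; exact e2
  have hlt1 : rp μ < s + (c + ε) :=
    (hmono.lt_iff_gt hst1 (hrp_pos μ hμ')).mp hup
  have hlt2 : s + (c - ε) < rp μ :=
    (hmono.lt_iff_gt (hrp_pos μ hμ') e3).mp hdown
  rw [Real.dist_eq, sub_zero, abs_lt]
  constructor <;> [skip; skip] <;>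
    · simp only [hs_def, hsf] at *
      linarith
end

section
/- Let d ≥ 2, α > 0, C₁ > 0 and C₂ < 0, and let h(r) = C₁ r^{-α} + C₂ r^{-α-1} on (0,∞). Then for all sufficiently small μ > 0: the equation h(r) = -μ has a unique solution r⁻(μ), the equation h(r) = μ has exactly two solutions r₁⁺(μ) < r₂⁺(μ), the set {r : h(r) ≤ -μ} equals (0, r⁻(μ)], the set {r : h(r) ≥ μ} equals [r₁⁺(μ), r₂⁺(μ)], and as μ → 0⁺: r⁻(μ) = -C₂/C₁ - (1/C₁)(-C₂/C₁)^{α+1} μ + o(μ), r₁⁺(μ) = -C₂/C₁ + (1/C₁)(-C₂/C₁)^{α+1} μ + o(μ), and r₂⁺(μ) = C₁^{1/α} μ^{-1/α} + C₂/(α C₁) + o(1). -/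
open Filter Set Asymptotics
open scoped Topology

namespace RootsAux

noncomputable def H (α C₁ C₂ r : ℝ) : ℝ := C₁ * r ^ (-α) + C₂ * r ^ (-α - 1)

variable {α C₁ C₂ : ℝ}

lemma rpow_succ' {r : ℝ} (hr : 0 < r) (p : ℝ) : r ^ p = r ^ (p - 1) * r := by
  have h := Real.rpow_add hr (p - 1) 1
  rw [Real.rpow_one] at h
  rw [← h]; congr 1; ring

lemma H_factor {r : ℝ} (hr : 0 < r) :
    H α C₁ C₂ r = r ^ (-α - 1) * (C₁ * r + C₂) := by
  rw [H, rpow_succ' hr (-α)]; ring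

lemma hasDerivAt_H {r : ℝ} (hr : 0 < r) :
    HasDerivAt (H α C₁ C₂) (r ^ (-α - 2) * (-(α * C₁) * r - (α + 1) * C₂)) r := by
  have h1 := Real.hasDerivAt_rpow_const (x := r) (p := -α) (Or.inl hr.ne')
  have h2 := Real.hasDerivAt_rpow_const (x := r) (p := -α - 1) (Or.inl hr.ne')
  have h := (h1.const_mul C₁).add (h2.const_mul C₂)
  have e1 : r ^ (-α - 1) = r ^ (-α - 2) * r := by
    have := rpow_succ' hr (-α - 1)
    rw [this]; congr 2; ring
  have e2 : r ^ (-α - 1 - 1) = r ^ (-α - 2) := by congr 1; ring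
  refine h.congr_deriv ?_
  rw [e1, e2]; ring

section Basic
variable (hα : 0 < α) (hC₁ : 0 < C₁) (hC₂ : C₂ < 0)
include hα hC₁ hC₂
set_option linter.unusedSectionVars false

lemma r0_pos : 0 < -C₂ / C₁ := div_pos (neg_pos.2 hC₂) hC₁

lemma rs_pos : 0 < (α + 1) / α * (-C₂ / C₁) :=
  mul_pos (div_pos (by linarith) hα) (r0_pos hα hC₁ hC₂)

lemma r0_lt_rs : -C₂ / C₁ < (α + 1) / α * (-C₂ / C₁) := by
  have h0 := r0_pos hα hC₁ hC₂
  have h1 : 1 < (α + 1) / α := by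
    rw [lt_div_iff₀ hα]; linarith
  nlinarith

lemma H_pos_of_gt {r : ℝ} (hr : -C₂ / C₁ < r) : 0 < H α C₁ C₂ r := by
  have h0 : (0 : ℝ) < r := (r0_pos hα hC₁ hC₂).trans hr
  rw [H_factor h0]
  have : 0 < C₁ * r + C₂ := by
    rw [div_lt_iff₀ hC₁] at hr; linarith
  exact mul_pos (Real.rpow_pos_of_pos h0 _) this

lemma H_neg_of_lt {r : ℝ} (h0 : 0 < r) (hr : r < -C₂ / C₁) : H α C₁ C₂ r < 0 := by
  rw [H_factor h0]
  have : C₁ * r + C₂ < 0 := by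
    rw [lt_div_iff₀ hC₁] at hr; linarith
  exact mul_neg_of_pos_of_neg (Real.rpow_pos_of_pos h0 _) this

lemma H_r0_eq : H α C₁ C₂ (-C₂ / C₁) = 0 := by
  rw [H_factor (r0_pos hα hC₁ hC₂)]
  have : C₁ * (-C₂ / C₁) + C₂ = 0 := by field_simp; ring
  rw [this, mul_zero]

lemma strictMonoOn_H : StrictMonoOn (H α C₁ C₂) (Ioc 0 ((α + 1) / α * (-C₂ / C₁))) := by
  apply strictMonoOn_of_deriv_pos (convex_Ioc _ _)
  · exact fun x hx => ((hasDerivAt_H hx.1).continuousAt).continuousWithinAt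
  · rw [interior_Ioc]
    intro x hx
    rw [(hasDerivAt_H hx.1).deriv]
    have h1 : 0 < x ^ (-α - 2) := Real.rpow_pos_of_pos hx.1 _
    have h2 : α * C₁ * x < α * C₁ * ((α + 1) / α * (-C₂ / C₁)) := by
      have := mul_pos hα hC₁
      nlinarith [hx.2]
    have h3 : α * C₁ * ((α + 1) / α * (-C₂ / C₁)) = (α + 1) * (-C₂) := by
      field_simp
    have : 0 < -(α * C₁) * x - (α + 1) * C₂ := by rw [h3] at h2; nlinarith
    positivity

lemma strictAntiOn_H : StrictAntiOn (H α C₁ C₂) (Ici ((α + 1) / α * (-C₂ / C₁))) := by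
  have hs := rs_pos hα hC₁ hC₂
  apply strictAntiOn_of_deriv_neg (convex_Ici _)
  · exact fun x hx => ((hasDerivAt_H (hs.trans_le hx)).continuousAt).continuousWithinAt
  · rw [interior_Ici]
    intro x hx
    rw [(hasDerivAt_H (hs.trans hx)).deriv]
    have h1 : 0 < x ^ (-α - 2) := Real.rpow_pos_of_pos (hs.trans hx) _
    have hx' : (α + 1) / α * (-C₂ / C₁) < x := hx
    have h2 : α * C₁ * ((α + 1) / α * (-C₂ / C₁)) < α * C₁ * x := by
      have := mul_pos hα hC₁
      nlinarith
    have h3 : α * C₁ * ((α + 1) / α * (-C₂ / C₁)) = (α + 1) * (-C₂) := by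
      field_simp
    have : -(α * C₁) * x - (α + 1) * C₂ < 0 := by rw [h3] at h2; nlinarith
    exact mul_neg_of_pos_of_neg h1 this

lemma tendsto_H_atBot : Tendsto (H α C₁ C₂) (𝓝[>] (0 : ℝ)) atBot := by
  have h1 : Tendsto (fun r : ℝ => r ^ (-α - 1)) (𝓝[>] (0 : ℝ)) atTop := by
    have h2 : Tendsto (fun r : ℝ => (r⁻¹) ^ (α + 1)) (𝓝[>] (0 : ℝ)) atTop :=
      (tendsto_rpow_atTop (by linarith : (0:ℝ) < α + 1)).comp tendsto_inv_nhdsGT_zero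
    refine h2.congr' ?_
    filter_upwards [self_mem_nhdsWithin] with r (hr : 0 < r)
    rw [Real.inv_rpow hr.le, ← Real.rpow_neg hr.le]
    congr 1; ring
  have h3 : Tendsto (fun r : ℝ => C₁ * r + C₂) (𝓝[>] (0 : ℝ)) (𝓝 C₂) := by
    have : Tendsto (fun r : ℝ => C₁ * r + C₂) (𝓝 (0 : ℝ)) (𝓝 (C₁ * 0 + C₂)) :=
      ((continuous_const.mul continuous_id).add continuous_const).tendsto 0
    rw [mul_zero, zero_add] at this
    exact this.mono_left nhdsWithin_le_nhds
  have := h1.atTop_mul_neg hC₂ h3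
  refine this.congr' ?_
  filter_upwards [self_mem_nhdsWithin] with r (hr : 0 < r)
  rw [H_factor hr]

lemma tendsto_H_atTop : Tendsto (H α C₁ C₂) atTop (𝓝 0) := by
  have h1 := tendsto_rpow_neg_atTop hα
  have h2 := tendsto_rpow_neg_atTop (by linarith : (0:ℝ) < α + 1)
  have := (h1.const_mul C₁).add (h2.const_mul C₂)
  rw [mul_zero, mul_zero, add_zero] at this
  refine this.congr' ?_
  filter_upwards [eventually_gt_atTop 0] with r hr
  rw [H]; congr 2; ring


lemma continuousOn_H_Icc {a b : ℝ} (ha : 0 < a) :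
    ContinuousOn (H α C₁ C₂) (Icc a b) :=
  fun r hr => ((hasDerivAt_H (ha.trans_le hr.1)).continuousAt).continuousWithinAt

lemma H_nonneg_of_ge {r : ℝ} (hr : -C₂ / C₁ ≤ r) : 0 ≤ H α C₁ C₂ r := by
  rcases eq_or_lt_of_le hr with h | h
  · rw [← h, H_r0_eq hα hC₁ hC₂]
  · exact (H_pos_of_gt hα hC₁ hC₂ h).le

lemma lt_r0_of_H_neg {r : ℝ} (hr : 0 < r) (h : H α C₁ C₂ r < 0) : r < -C₂ / C₁ := by
  by_contra hle
  exact absurd h (not_lt.2 (H_nonneg_of_ge hα hC₁ hC₂ (not_lt.1 hle)))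

lemma gt_r0_of_H_pos {r : ℝ} (hr : 0 < r) (h : 0 < H α C₁ C₂ r) : -C₂ / C₁ < r := by
  by_contra hle
  rcases eq_or_lt_of_le (not_lt.1 hle) with h' | h'
  · rw [h', H_r0_eq hα hC₁ hC₂] at h; exact lt_irrefl 0 h
  · exact absurd h (not_lt.2 (H_neg_of_lt hα hC₁ hC₂ hr h').le)

lemma exists_roots {μ : ℝ} (hμ0 : 0 < μ)
    (hμM : μ < H α C₁ C₂ ((α + 1) / α * (-C₂ / C₁))) :
    ∃ x y z : ℝ,
      x ∈ Ioo 0 (-C₂ / C₁) ∧ H α C₁ C₂ x = -μ ∧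
      y ∈ Ioo (-C₂ / C₁) ((α + 1) / α * (-C₂ / C₁)) ∧ H α C₁ C₂ y = μ ∧
      z ∈ Ioi ((α + 1) / α * (-C₂ / C₁)) ∧ H α C₁ C₂ z = μ := by
  set r₀ := -C₂ / C₁ with hr₀
  set rs := (α + 1) / α * (-C₂ / C₁) with hrs
  have hr0 : 0 < r₀ := r0_pos hα hC₁ hC₂
  have hrs0 : 0 < rs := rs_pos hα hC₁ hC₂
  have hr0rs : r₀ < rs := r0_lt_rs hα hC₁ hC₂
  -- x
  have hev : ∀ᶠ a in 𝓝[>] (0:ℝ), H α C₁ C₂ a < -μ ∧ a ∈ Ioo (0:ℝ) r₀ := by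
    filter_upwards [(tendsto_H_atBot hα hC₁ hC₂).eventually (eventually_lt_atBot (-μ)),
      Ioo_mem_nhdsGT_of_mem ⟨le_refl (0:ℝ), hr0⟩] with a h1 h2
    exact ⟨h1, h2⟩
  obtain ⟨a, hHa, ha⟩ := hev.exists
  have hx : -μ ∈ Ioo (H α C₁ C₂ a) (H α C₁ C₂ r₀) := by
    rw [H_r0_eq hα hC₁ hC₂]; exact ⟨hHa, by linarith⟩
  obtain ⟨x, hxm, hHx⟩ := intermediate_value_Ioo ha.2.le (continuousOn_H_Icc hα hC₁ hC₂ ha.1) hx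
  -- y
  have hy : μ ∈ Ioo (H α C₁ C₂ r₀) (H α C₁ C₂ rs) := by
    rw [H_r0_eq hα hC₁ hC₂]; exact ⟨hμ0, hμM⟩
  obtain ⟨y, hym, hHy⟩ := intermediate_value_Ioo hr0rs.le (continuousOn_H_Icc hα hC₁ hC₂ hr0) hy
  -- z
  have hev2 : ∀ᶠ b in atTop, H α C₁ C₂ b < μ ∧ rs < b := by
    filter_upwards [(tendsto_H_atTop hα hC₁ hC₂).eventually_lt_const hμ0,
      eventually_gt_atTop rs] with b h1 h2
    exact ⟨h1, h2⟩
  obtain ⟨b, hHb, hb⟩ := hev2.exists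
  have hz : μ ∈ Ioo (H α C₁ C₂ b) (H α C₁ C₂ rs) := ⟨hHb, hμM⟩
  obtain ⟨z, hzm, hHz⟩ := intermediate_value_Ioo' hb.le (continuousOn_H_Icc hα hC₁ hC₂ hrs0) hz
  exact ⟨x, y, z, ⟨ha.1.trans hxm.1, hxm.2⟩, hHx, ⟨hym.1, hym.2⟩, hHy, hzm.1, hHz⟩


lemma unique_neg {μ x r : ℝ} (hμ0 : 0 < μ) (hx : x ∈ Ioo 0 (-C₂ / C₁))
    (hHx : H α C₁ C₂ x = -μ) (hr : 0 < r) (hHr : H α C₁ C₂ r = -μ) : r = x := by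
  have hrlt : r < -C₂ / C₁ :=
    lt_r0_of_H_neg hα hC₁ hC₂ hr (by rw [hHr]; linarith)
  have h1 : r ∈ Ioc (0:ℝ) ((α + 1) / α * (-C₂ / C₁)) :=
    ⟨hr, (hrlt.trans (r0_lt_rs hα hC₁ hC₂)).le⟩
  have h2 : x ∈ Ioc (0:ℝ) ((α + 1) / α * (-C₂ / C₁)) :=
    ⟨hx.1, (hx.2.trans (r0_lt_rs hα hC₁ hC₂)).le⟩
  exact (strictMonoOn_H hα hC₁ hC₂).injOn h1 h2 (hHr.trans hHx.symm)

lemma unique_pos {μ y z r : ℝ} (hμ0 : 0 < μ)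
    (hy : y ∈ Ioo (-C₂ / C₁) ((α + 1) / α * (-C₂ / C₁))) (hHy : H α C₁ C₂ y = μ)
    (hz : z ∈ Ioi ((α + 1) / α * (-C₂ / C₁))) (hHz : H α C₁ C₂ z = μ)
    (hr : 0 < r) (hHr : H α C₁ C₂ r = μ) : r = y ∨ r = z := by
  rcases le_or_gt r ((α + 1) / α * (-C₂ / C₁)) with hc | hc
  · left
    have h1 : r ∈ Ioc (0:ℝ) ((α + 1) / α * (-C₂ / C₁)) := ⟨hr, hc⟩
    have h2 : y ∈ Ioc (0:ℝ) ((α + 1) / α * (-C₂ / C₁)) :=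
      ⟨(r0_pos hα hC₁ hC₂).trans hy.1, hy.2.le⟩
    exact (strictMonoOn_H hα hC₁ hC₂).injOn h1 h2 (hHr.trans hHy.symm)
  · right
    exact (strictAntiOn_H hα hC₁ hC₂).injOn (mem_Ici.2 (le_of_lt hc)) (mem_Ici.2 (le_of_lt hz))
      (hHr.trans hHz.symm)

lemma set_neg_eq {μ x : ℝ} (hμ0 : 0 < μ) (hx : x ∈ Ioo 0 (-C₂ / C₁))
    (hHx : H α C₁ C₂ x = -μ) :
    {r ∈ Ioi (0:ℝ) | H α C₁ C₂ r ≤ -μ} = Ioc 0 x := by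
  have hr0rs := r0_lt_rs hα hC₁ hC₂
  have hxm : x ∈ Ioc (0:ℝ) ((α + 1) / α * (-C₂ / C₁)) := ⟨hx.1, (hx.2.trans hr0rs).le⟩
  ext r
  simp only [mem_setOf_eq, mem_Ioi, mem_Ioc]
  constructor
  · rintro ⟨hr, hle⟩
    refine ⟨hr, ?_⟩
    by_contra hgt
    push_neg at hgt
    have hrlt : r < -C₂ / C₁ :=
      lt_r0_of_H_neg hα hC₁ hC₂ hr (by linarith)
    have := (strictMonoOn_H hα hC₁ hC₂) hxm ⟨hr, (hrlt.trans hr0rs).le⟩ hgt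
    rw [hHx] at this; linarith
  · rintro ⟨hr, hle⟩
    refine ⟨hr, ?_⟩
    rcases eq_or_lt_of_le hle with h | h
    · rw [h, hHx]
    · have := (strictMonoOn_H hα hC₁ hC₂) ⟨hr, (h.trans_le hxm.2).le⟩ hxm h
      rw [hHx] at this; linarith

lemma set_pos_eq {μ y z : ℝ} (hμ0 : 0 < μ)
    (hy : y ∈ Ioo (-C₂ / C₁) ((α + 1) / α * (-C₂ / C₁))) (hHy : H α C₁ C₂ y = μ)
    (hz : z ∈ Ioi ((α + 1) / α * (-C₂ / C₁))) (hHz : H α C₁ C₂ z = μ) :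
    {r ∈ Ioi (0:ℝ) | μ ≤ H α C₁ C₂ r} = Icc y z := by
  have hr0 := r0_pos hα hC₁ hC₂
  have hr0rs := r0_lt_rs hα hC₁ hC₂
  have hym : y ∈ Ioc (0:ℝ) ((α + 1) / α * (-C₂ / C₁)) := ⟨hr0.trans hy.1, hy.2.le⟩
  ext r
  simp only [mem_setOf_eq, mem_Ioi, mem_Icc]
  constructor
  · rintro ⟨hr, hle⟩
    have hrgt : -C₂ / C₁ < r := gt_r0_of_H_pos hα hC₁ hC₂ hr (by linarith)
    constructor
    · by_contra hlt
      push_neg at hlt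
      have := (strictMonoOn_H hα hC₁ hC₂) ⟨hr, (hlt.trans hy.2).le⟩ hym hlt
      rw [hHy] at this; linarith
    · by_contra hgt
      push_neg at hgt
      have hzrs : (α + 1) / α * (-C₂ / C₁) ≤ z := hz.le
      have := (strictAntiOn_H hα hC₁ hC₂) hzrs (hzrs.trans hgt.le) hgt
      rw [hHz] at this; linarith
  · rintro ⟨h1, h2⟩
    have hrpos : 0 < r := hym.1.trans_le h1
    refine ⟨hrpos, ?_⟩
    rcases le_or_gt r ((α + 1) / α * (-C₂ / C₁)) with hc | hc
    · rcases eq_or_lt_of_le h1 with h | h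
      · rw [← h, hHy]
      · have := (strictMonoOn_H hα hC₁ hC₂) hym ⟨hrpos, hc⟩ h
        rw [hHy] at this; linarith
    · rcases eq_or_lt_of_le h2 with h | h
      · rw [h, hHz]
      · have := (strictAntiOn_H hα hC₁ hC₂) hc.le (hc.le.trans h.le) h
        rw [hHz] at this; linarith



lemma tendsto_G :
    Tendsto (fun r : ℝ => r - C₁ ^ (1 / α) * r * (C₁ + C₂ / r) ^ (-1 / α) - C₂ / (α * C₁))
      atTop (𝓝 0) := by
  set φ : ℝ → ℝ := fun u => C₁ ^ (1 / α) * (C₁ + C₂ * u) ^ (-1 / α) with hφ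
  have hinner : HasDerivAt (fun u : ℝ => C₁ + C₂ * u) C₂ 0 := by
    simpa using ((hasDerivAt_id (0:ℝ)).const_mul C₂).const_add C₁
  have hcomp : HasDerivAt (fun u : ℝ => (C₁ + C₂ * u) ^ (-1 / α))
      ((-1 / α) * C₁ ^ (-1 / α - 1) * C₂) 0 := by
    have := hinner.rpow_const (p := -1 / α) (Or.inl (by simpa using hC₁.ne'))
    have e : C₁ + C₂ * (0:ℝ) = C₁ := by ring
    rw [e] at this
    convert this using 1
    ring
  have hφd : HasDerivAt φ (C₁ ^ (1 / α) * ((-1 / α) * C₁ ^ (-1 / α - 1) * C₂)) 0 :=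
    hcomp.const_mul _
  have hslope : Tendsto (slope φ 0) (𝓝[≠] (0:ℝ))
      (𝓝 (C₁ ^ (1 / α) * ((-1 / α) * C₁ ^ (-1 / α - 1) * C₂))) :=
    hasDerivAt_iff_tendsto_slope.1 hφd
  have hinv : Tendsto (fun r : ℝ => r⁻¹) atTop (𝓝[≠] (0:ℝ)) :=
    tendsto_inv_atTop_nhdsGT_zero.mono_right (nhdsWithin_mono _ (fun x hx => ne_of_gt hx))
  have hcompose := hslope.comp hinv
  -- value of the derivative constant
  have hval : C₁ ^ (1 / α) * ((-1 / α) * C₁ ^ (-1 / α - 1) * C₂) = -C₂ / (α * C₁) := by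
    have h1 : C₁ ^ (1 / α) * C₁ ^ (-1 / α - 1) = C₁⁻¹ := by
      rw [← Real.rpow_add hC₁,
        show (1 / α + (-1 / α - 1) : ℝ) = -1 by ring, Real.rpow_neg_one]
    calc C₁ ^ (1 / α) * ((-1 / α) * C₁ ^ (-1 / α - 1) * C₂)
        = (C₁ ^ (1 / α) * C₁ ^ (-1 / α - 1)) * ((-1 / α) * C₂) := by ring
      _ = -C₂ / (α * C₁) := by rw [h1]; field_simp
  rw [hval] at hcompose
  have hG : Tendsto (fun r : ℝ => -(slope φ 0 (r⁻¹)) - C₂ / (α * C₁)) atTop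
      (𝓝 (-(-C₂ / (α * C₁)) - C₂ / (α * C₁))) := (hcompose.neg).sub_const _
  have : (-(-C₂ / (α * C₁)) - C₂ / (α * C₁)) = 0 := by ring
  rw [this] at hG
  refine hG.congr' ?_
  have hφ0 : φ 0 = 1 := by
    simp only [hφ, mul_zero, add_zero]
    rw [← Real.rpow_add hC₁]
    rw [show (1 / α + -1 / α : ℝ) = 0 by ring, Real.rpow_zero]
  filter_upwards [eventually_gt_atTop (max 0 (-C₂ / C₁))] with r hr
  have hr0 : 0 < r := lt_of_le_of_lt (le_max_left _ _) hr
  have hs : slope φ 0 (r⁻¹) = (φ r⁻¹ - 1) * r := by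
    rw [slope_def_field, hφ0, sub_zero, div_eq_mul_inv, inv_inv]
  have hφr : φ r⁻¹ = C₁ ^ (1 / α) * (C₁ + C₂ / r) ^ (-1 / α) := by
    simp only [hφ]
    rw [← div_eq_mul_inv]
  rw [hs, hφr]; ring

end Basic
end RootsAux

open MeasureTheory Complex Filter Metric Set Asymptotics RootsAux
open scoped Topology

theorem roots_asymptotics_neg_C2
    {d : ℕ} (hd : 2 ≤ d) (α : ℝ) (hα : 0 < α)
    (C₁ C₂ : ℝ) (hC₁ : 0 < C₁) (hC₂ : C₂ < 0)
    (h : ℝ → ℝ) (hh : ∀ r : ℝ, 0 < r → h r = C₁ * r ^ (-α) + C₂ * r ^ (-α - 1)) :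
    ∃ μ₀ : ℝ, 0 < μ₀ ∧ ∃ rm r₁ r₂ : ℝ → ℝ,
      (∀ μ : ℝ, 0 < μ → μ < μ₀ →
        (0 < rm μ ∧ h (rm μ) = -μ ∧ (∀ r : ℝ, 0 < r → h r = -μ → r = rm μ)) ∧
        (0 < r₁ μ ∧ r₁ μ < r₂ μ ∧ h (r₁ μ) = μ ∧ h (r₂ μ) = μ ∧
          (∀ r : ℝ, 0 < r → h r = μ → r = r₁ μ ∨ r = r₂ μ)) ∧
        {r ∈ Set.Ioi (0 : ℝ) | h r ≤ -μ} = Set.Ioc 0 (rm μ) ∧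
        {r ∈ Set.Ioi (0 : ℝ) | μ ≤ h r} = Set.Icc (r₁ μ) (r₂ μ)) ∧
      (fun μ : ℝ => rm μ - (-C₂ / C₁ - 1 / C₁ * (-C₂ / C₁) ^ (α + 1) * μ))
          =o[𝓝[>] (0 : ℝ)] (fun μ => μ) ∧
      (fun μ : ℝ => r₁ μ - (-C₂ / C₁ + 1 / C₁ * (-C₂ / C₁) ^ (α + 1) * μ))
          =o[𝓝[>] (0 : ℝ)] (fun μ => μ) ∧
      Tendsto (fun μ : ℝ => r₂ μ - C₁ ^ (1 / α) * μ ^ (-1 / α) - C₂ / (α * C₁))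
        (𝓝[>] (0 : ℝ)) (𝓝 0) := by
  classical
  have hH' : ∀ r : ℝ, 0 < r → h r = H α C₁ C₂ r := fun r hr => (hh r hr).trans rfl
  set R0 : ℝ := -C₂ / C₁ with hR0
  set RS : ℝ := (α + 1) / α * (-C₂ / C₁) with hRS
  have hr0pos : 0 < R0 := r0_pos hα hC₁ hC₂
  have hrspos : 0 < RS := rs_pos hα hC₁ hC₂
  have hr0rs : R0 < RS := r0_lt_rs hα hC₁ hC₂
  have hHR0 : H α C₁ C₂ R0 = 0 := H_r0_eq hα hC₁ hC₂
  set M : ℝ := H α C₁ C₂ RS with hM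
  have hMpos : 0 < M := H_pos_of_gt hα hC₁ hC₂ hr0rs
  refine ⟨M, hMpos, ?_⟩
  have key : ∀ μ : ℝ, ∃ x y z : ℝ, 0 < μ → μ < M →
      (x ∈ Ioo 0 R0 ∧ H α C₁ C₂ x = -μ) ∧
      (y ∈ Ioo R0 RS ∧ H α C₁ C₂ y = μ) ∧
      (z ∈ Ioi RS ∧ H α C₁ C₂ z = μ) := by
    intro μ
    by_cases hc : 0 < μ ∧ μ < M
    · obtain ⟨x, y, z, h1, h2, h3, h4, h5, h6⟩ := exists_roots hα hC₁ hC₂ hc.1 hc.2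
      exact ⟨x, y, z, fun _ _ => ⟨⟨h1, h2⟩, ⟨h3, h4⟩, ⟨h5, h6⟩⟩⟩
    · exact ⟨1, 1, 2, fun ha hb => absurd ⟨ha, hb⟩ hc⟩
  choose rm r₁ r₂ hkey using key
  have hIoo : ∀ δ : ℝ, 0 < δ → Ioo (0:ℝ) δ ∈ 𝓝[>] (0:ℝ) :=
    fun δ hδ => Ioo_mem_nhdsGT_of_mem ⟨le_rfl, hδ⟩
  -- tendsto facts
  have T1 : Tendsto rm (𝓝[>] (0:ℝ)) (𝓝 R0) := by
    rw [tendsto_order]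
    constructor
    · intro a ha
      by_cases hapos : 0 < a
      · have hHa : H α C₁ C₂ a < 0 := H_neg_of_lt hα hC₁ hC₂ hapos ha
        have hδ : (0:ℝ) < min M (-H α C₁ C₂ a) := lt_min hMpos (by linarith)
        filter_upwards [hIoo _ hδ] with μ hμ
        obtain ⟨⟨hxm, hHx⟩, -, -⟩ := hkey μ hμ.1 ((hμ.2.trans_le (min_le_left _ _)))
        by_contra hle
        push_neg at hle
        have hmono := (strictMonoOn_H hα hC₁ hC₂).monotoneOn
          ⟨hxm.1, (hxm.2.trans hr0rs).le⟩ ⟨hapos, (ha.trans hr0rs).le⟩ hle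
        rw [hHx] at hmono
        have := hμ.2.trans_le (min_le_right _ _)
        linarith
      · filter_upwards [hIoo _ hMpos] with μ hμ
        obtain ⟨⟨hxm, -⟩, -, -⟩ := hkey μ hμ.1 hμ.2
        push_neg at hapos
        exact hapos.trans_lt hxm.1
    · intro a ha
      filter_upwards [hIoo _ hMpos] with μ hμ
      obtain ⟨⟨hxm, -⟩, -, -⟩ := hkey μ hμ.1 hμ.2
      exact hxm.2.trans ha
  have T2 : Tendsto r₁ (𝓝[>] (0:ℝ)) (𝓝 R0) := by
    rw [tendsto_order]
    constructor
    · intro a ha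
      filter_upwards [hIoo _ hMpos] with μ hμ
      obtain ⟨-, ⟨hym, -⟩, -⟩ := hkey μ hμ.1 hμ.2
      exact ha.trans hym.1
    · intro a ha
      by_cases hc : a < RS
      · have hHa : 0 < H α C₁ C₂ a := H_pos_of_gt hα hC₁ hC₂ ha
        have hδ : (0:ℝ) < min M (H α C₁ C₂ a) := lt_min hMpos hHa
        filter_upwards [hIoo _ hδ] with μ hμ
        obtain ⟨-, ⟨hym, hHy⟩, -⟩ := hkey μ hμ.1 ((hμ.2.trans_le (min_le_left _ _)))
        by_contra hle
        push_neg at hle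
        have hmono := (strictMonoOn_H hα hC₁ hC₂).monotoneOn
          ⟨hr0pos.trans ha, hc.le⟩ ⟨hr0pos.trans hym.1, hym.2.le⟩ hle
        rw [hHy] at hmono
        have := hμ.2.trans_le (min_le_right _ _)
        linarith
      · push_neg at hc
        filter_upwards [hIoo _ hMpos] with μ hμ
        obtain ⟨-, ⟨hym, -⟩, -⟩ := hkey μ hμ.1 hμ.2
        exact hym.2.trans_le hc
  have T3 : Tendsto r₂ (𝓝[>] (0:ℝ)) atTop := by
    rw [Filter.tendsto_atTop]
    intro b
    have hcRS : RS < max b RS + 1 := by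
      have := le_max_right b RS; linarith
    have hHc : 0 < H α C₁ C₂ (max b RS + 1) :=
      H_pos_of_gt hα hC₁ hC₂ (hr0rs.trans hcRS)
    have hδ : (0:ℝ) < min M (H α C₁ C₂ (max b RS + 1)) := lt_min hMpos hHc
    filter_upwards [hIoo _ hδ] with μ hμ
    obtain ⟨-, -, ⟨hzm, hHz⟩⟩ := hkey μ hμ.1 ((hμ.2.trans_le (min_le_left _ _)))
    have hzgt : max b RS + 1 < r₂ μ := by
      by_contra hle
      push_neg at hle
      have hanti := (strictAntiOn_H hα hC₁ hC₂).antitoneOn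
        (mem_Ici.2 (le_of_lt hzm)) (mem_Ici.2 (le_of_lt (lt_of_le_of_lt (le_refl RS) hcRS))) hle
      rw [hHz] at hanti
      have := hμ.2.trans_le (min_le_right _ _)
      linarith
    have : b ≤ max b RS + 1 := by
      have := le_max_left b RS; linarith
    linarith
  -- derivative constant
  have hX : -(α * C₁) * R0 - (α + 1) * C₂ = C₁ * R0 := by
    rw [hR0]; field_simp; ring
  have hDval : R0 ^ (-α - 2) * (-(α * C₁) * R0 - (α + 1) * C₂) = C₁ * R0 ^ (-α - 1) := by
    rw [hX, rpow_succ' hr0pos (-α - 1), show (-α - 1 - 1 : ℝ) = -α - 2 by ring]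
    ring
  set D : ℝ := C₁ * R0 ^ (-α - 1) with hD
  have hDpos : 0 < D := mul_pos hC₁ (Real.rpow_pos_of_pos hr0pos _)
  have hder : HasDerivAt (H α C₁ C₂) D R0 := by
    have := hasDerivAt_H (α := α) (C₁ := C₁) (C₂ := C₂) hr0pos
    rwa [hDval] at this
  have hcoeff : 1 / C₁ * R0 ^ (α + 1) = 1 / D := by
    rw [hD]
    have hne : R0 ^ (α + 1) ≠ 0 := (Real.rpow_pos_of_pos hr0pos _).ne'
    have h1 : R0 ^ (-α - 1) = (R0 ^ (α + 1))⁻¹ := by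
      rw [show (-α - 1 : ℝ) = -(α + 1) by ring, Real.rpow_neg hr0pos.le]
    rw [h1]
    field_simp
  have hlo := hasDerivAt_iff_isLittleO.1 hder
  rw [hHR0] at hlo
  -- little-o for rm
  have Urm : (fun μ : ℝ => rm μ - (R0 - 1 / C₁ * R0 ^ (α + 1) * μ)) =o[𝓝[>] (0:ℝ)]
      (fun μ => μ) := by
    have h1 := hlo.comp_tendsto T1
    have h2 : (fun μ : ℝ => -μ - (rm μ - R0) * D) =o[𝓝[>] (0:ℝ)]
        (fun μ => rm μ - R0) := by
      refine h1.congr' ?_ EventuallyEq.rfl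
      filter_upwards [hIoo _ hMpos] with μ hμ
      obtain ⟨⟨-, hHx⟩, -, -⟩ := hkey μ hμ.1 hμ.2
      simp only [Function.comp_apply, smul_eq_mul, hHx]
      ring
    have hBigO : (fun μ : ℝ => rm μ - R0) =O[𝓝[>] (0:ℝ)] (fun μ => μ) := by
      rw [isBigO_iff]
      refine ⟨2 / D, ?_⟩
      filter_upwards [h2.def (half_pos hDpos), self_mem_nhdsWithin] with μ hb (hμ : 0 < μ)
      simp only [Real.norm_eq_abs] at *
      have h3 : |(rm μ - R0) * D| ≤ |(-μ - (rm μ - R0) * D)| + |(-μ)| := by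
        calc |(rm μ - R0) * D|
            = |(-μ - (rm μ - R0) * D) - (-μ)| := by
              rw [show (-μ - (rm μ - R0) * D) - (-μ) = -((rm μ - R0) * D) by ring,
                abs_neg]
          _ ≤ |(-μ - (rm μ - R0) * D)| + |(-μ)| := abs_sub _ _
      rw [abs_mul, abs_of_pos hDpos, abs_neg, abs_of_pos hμ] at h3
      rw [abs_of_pos hμ]
      have h5 : |rm μ - R0| * D ≤ 2 * μ := by linarith
      rw [div_mul_eq_mul_div, le_div_iff₀ hDpos]
      linarith
    have h4 := h2.trans_isBigO hBigO
    have h5 := h4.const_mul_left (-(1 / D))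
    refine h5.congr' (EventuallyEq.of_eq (funext fun μ => ?_)) EventuallyEq.rfl
    rw [hcoeff]
    have hD0 : D ≠ 0 := hDpos.ne'
    field_simp
    ring
  have Ur1 : (fun μ : ℝ => r₁ μ - (R0 + 1 / C₁ * R0 ^ (α + 1) * μ)) =o[𝓝[>] (0:ℝ)]
      (fun μ => μ) := by
    have h1 := hlo.comp_tendsto T2
    have h2 : (fun μ : ℝ => μ - (r₁ μ - R0) * D) =o[𝓝[>] (0:ℝ)]
        (fun μ => r₁ μ - R0) := by
      refine h1.congr' ?_ EventuallyEq.rfl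
      filter_upwards [hIoo _ hMpos] with μ hμ
      obtain ⟨-, ⟨-, hHy⟩, -⟩ := hkey μ hμ.1 hμ.2
      simp only [Function.comp_apply, smul_eq_mul, hHy]
      ring
    have hBigO : (fun μ : ℝ => r₁ μ - R0) =O[𝓝[>] (0:ℝ)] (fun μ => μ) := by
      rw [isBigO_iff]
      refine ⟨2 / D, ?_⟩
      filter_upwards [h2.def (half_pos hDpos), self_mem_nhdsWithin] with μ hb (hμ : 0 < μ)
      simp only [Real.norm_eq_abs] at *
      have h3 : |(r₁ μ - R0) * D| ≤ |(μ - (r₁ μ - R0) * D)| + |μ| := by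
        calc |(r₁ μ - R0) * D|
            = |(μ - (r₁ μ - R0) * D) - μ| := by
              rw [show (μ - (r₁ μ - R0) * D) - μ = -((r₁ μ - R0) * D) by ring,
                abs_neg]
          _ ≤ |(μ - (r₁ μ - R0) * D)| + |μ| := abs_sub _ _
      rw [abs_mul, abs_of_pos hDpos, abs_of_pos hμ] at h3
      rw [abs_of_pos hμ]
      have h5 : |r₁ μ - R0| * D ≤ 2 * μ := by linarith
      rw [div_mul_eq_mul_div, le_div_iff₀ hDpos]
      linarith
    have h4 := h2.trans_isBigO hBigO
    have h5 := h4.const_mul_left (-(1 / D))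
    refine h5.congr' (EventuallyEq.of_eq (funext fun μ => ?_)) EventuallyEq.rfl
    rw [hcoeff]
    have hD0 : D ≠ 0 := hDpos.ne'
    field_simp
    ring
  have Ur2 : Tendsto (fun μ : ℝ => r₂ μ - C₁ ^ (1 / α) * μ ^ (-1 / α) - C₂ / (α * C₁))
      (𝓝[>] (0:ℝ)) (𝓝 0) := by
    have hG := (tendsto_G hα hC₁ hC₂).comp T3
    refine hG.congr' ?_
    filter_upwards [hIoo _ hMpos] with μ hμ
    obtain ⟨-, -, ⟨hzm, hHz⟩⟩ := hkey μ hμ.1 hμ.2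
    have hz0 : 0 < r₂ μ := hrspos.trans hzm
    have hzR0 : R0 < r₂ μ := hr0rs.trans hzm
    have hc2 : 0 < C₁ + C₂ / r₂ μ := by
      rw [hR0, div_lt_iff₀ hC₁] at hzR0
      have : -C₁ * r₂ μ < C₂ := by linarith
      have h5 : -C₁ < C₂ / r₂ μ := by
        rw [lt_div_iff₀ hz0]; linarith
      linarith
    have hid : H α C₁ C₂ (r₂ μ) = (r₂ μ) ^ (-α) * (C₁ + C₂ / r₂ μ) := by
      rw [H_factor hz0, rpow_succ' hz0 (-α)]
      field_simp
    have hμeq : μ = (r₂ μ) ^ (-α) * (C₁ + C₂ / r₂ μ) := by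
      conv_lhs => rw [← hHz]
      exact hid
    have hrw : μ ^ (-1 / α) = r₂ μ * (C₁ + C₂ / r₂ μ) ^ (-1 / α) := by
      conv_lhs => rw [hμeq]
      rw [Real.mul_rpow (Real.rpow_pos_of_pos hz0 _).le hc2.le,
        ← Real.rpow_mul hz0.le, show (-α * (-1 / α) : ℝ) = 1 by field_simp,
        Real.rpow_one]
    simp only [Function.comp_apply]
    rw [hrw]
    ring
  refine ⟨rm, r₁, r₂, ?_, Urm, Ur1, Ur2⟩
  intro μ hμ0 hμM
  obtain ⟨⟨hxm, hHx⟩, ⟨hym, hHy⟩, ⟨hzm, hHz⟩⟩ := hkey μ hμ0 hμM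
  have hrmpos : 0 < rm μ := hxm.1
  have hy0 : 0 < r₁ μ := hr0pos.trans hym.1
  have hz0 : 0 < r₂ μ := hrspos.trans hzm
  refine ⟨⟨hrmpos, ?_, ?_⟩, ⟨hy0, hym.2.trans hzm, ?_, ?_, ?_⟩, ?_, ?_⟩
  · rw [hH' _ hrmpos]; exact hHx
  · intro r hr hre
    rw [hH' r hr] at hre
    exact unique_neg hα hC₁ hC₂ hμ0 hxm hHx hr hre
  · rw [hH' _ hy0]; exact hHy
  · rw [hH' _ hz0]; exact hHz
  · intro r hr hre
    rw [hH' r hr] at hre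
    exact unique_pos hα hC₁ hC₂ hμ0 hym hHy hzm hHz hr hre
  · have hset : {r ∈ Ioi (0:ℝ) | h r ≤ -μ} = {r ∈ Ioi (0:ℝ) | H α C₁ C₂ r ≤ -μ} := by
      ext r
      constructor <;> rintro ⟨h1, h2⟩
      · exact ⟨h1, by rwa [hH' r h1] at h2⟩
      · exact ⟨h1, by rwa [hH' r h1]⟩
    rw [hset]
    exact set_neg_eq hα hC₁ hC₂ hμ0 hxm hHx
  · have hset : {r ∈ Ioi (0:ℝ) | μ ≤ h r} = {r ∈ Ioi (0:ℝ) | μ ≤ H α C₁ C₂ r} := by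
      ext r
      constructor <;> rintro ⟨h1, h2⟩
      · exact ⟨h1, by rwa [hH' r h1] at h2⟩
      · exact ⟨h1, by rwa [hH' r h1]⟩
    rw [hset]
    exact set_pos_eq hα hC₁ hC₂ hμ0 hym hHy hzm hHz
end
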